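/- arXiv:1806.02119 — 10 statements merged into one kernel-verified Lean document; each statement's English description precedes it below -/
import Mathlib

section
/- Let p be a prime, and let ζ₁, ..., ζ_ℓ be p-th roots of unity in ℂ with 1 ≤ ℓ < p. Then no linear combination c₁ζ₁ + ... + c_ℓζ_ℓ with positive natural number coefficients c₁, ..., c_ℓ can equal 0. -/
open Polynomial Finset

/-- Let `p` be a prime and let `ζ₁, …, ζ_ℓ` be `p`-th roots of unity
in `ℂ` with `1 ≤ ℓ < p`.  Then no linear combination `c₁ζ₁ + ⋯ + c_ℓζ_ℓ` with positive
natural number coefficients can equal `0`. -/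
theorem no_positive_combination_of_pth_roots_vanishes
    (p : ℕ) (hp : p.Prime) (ℓ : ℕ) (hℓ1 : 1 ≤ ℓ) (hℓp : ℓ < p)
    (ζ : Fin ℓ → ℂ) (hζ : ∀ i, (ζ i) ^ p = 1)
    (c : Fin ℓ → ℕ) (hc : ∀ i, 0 < c i) :
    (∑ i, (c i : ℂ) * ζ i) ≠ 0 := by
  haveI : NeZero p := ⟨hp.pos.ne'⟩
  haveI : Fact p.Prime := ⟨hp⟩
  haveI : Nonempty (Fin ℓ) := Fin.pos_iff_nonempty.mp hℓ1
  intro h0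
  by_cases hall : ∀ i, ζ i = 1
  · have : (∑ i, (c i : ℂ) * ζ i) = ∑ i, (c i : ℂ) := by
      refine Finset.sum_congr rfl fun i _ => by rw [hall i, mul_one]
    rw [this] at h0
    have hnat : (0:ℕ) < ∑ i : Fin ℓ, c i :=
      Finset.sum_pos (fun i _ => hc i) Finset.univ_nonempty
    exact hnat.ne' (by exact_mod_cast h0)
  · push_neg at hall
    obtain ⟨j, hj⟩ := hall
    have horder : orderOf (ζ j) = p := by
      rcases (hp.eq_one_or_self_of_dvd _ (orderOf_dvd_of_pow_eq_one (hζ j))) with h | h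
      · exact absurd (orderOf_eq_one_iff.mp h) hj
      · exact h
    have hprim : IsPrimitiveRoot (ζ j) p := horder ▸ IsPrimitiveRoot.orderOf (ζ j)
    have hex : ∀ i, ∃ m < p, (ζ j) ^ m = ζ i := fun i =>
      hprim.eq_pow_of_pow_eq_one (hζ i)
    choose k hk hkζ using hex
    set P : ℚ[X] := ∑ i, Polynomial.C (c i : ℚ) * X ^ (k i) with hP
    have hevalζ : Polynomial.aeval (ζ j) P = 0 := by
      rw [hP, map_sum]
      rw [← h0]
      refine Finset.sum_congr rfl fun i _ => ?_
      simp [hkζ i]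
    have hPne : P ≠ 0 := by
      intro h
      have := congrArg (Polynomial.eval (1:ℚ)) h
      simp only [hP, Polynomial.eval_finset_sum, Polynomial.eval_mul, Polynomial.eval_C,
        Polynomial.eval_pow, Polynomial.eval_X, one_pow, mul_one, Polynomial.eval_zero] at this
      have hpos : (0:ℚ) < ∑ i : Fin ℓ, (c i : ℚ) :=
        Finset.sum_pos (fun i _ => by exact_mod_cast hc i) Finset.univ_nonempty
      exact hpos.ne' this
    have hdvd : cyclotomic p ℚ ∣ P := by
      rw [cyclotomic_eq_minpoly_rat hprim hp.pos]
      exact minpoly.dvd ℚ _ hevalζ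
    obtain ⟨q, hq⟩ := hdvd
    have hqne : q ≠ 0 := by rintro rfl; rw [mul_zero] at hq; exact hPne hq
    have hdegΦ : (cyclotomic p ℚ).natDegree = p - 1 := by
      rw [natDegree_cyclotomic, Nat.totient_prime hp]
    have hdegP : P.natDegree ≤ p - 1 := by
      refine (Polynomial.natDegree_sum_le _ _).trans ?_
      rw [Finset.fold_max_le]
      refine ⟨Nat.zero_le _, fun i _ => ?_⟩
      calc (Polynomial.C ((c i : ℚ)) * X ^ (k i)).natDegree ≤ k i :=
            (Polynomial.natDegree_C_mul_le _ _).trans_eq (Polynomial.natDegree_X_pow _)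
        _ ≤ p - 1 := Nat.le_sub_one_of_lt (hk i)
    have hqdeg : q.natDegree = 0 := by
      have := Polynomial.natDegree_mul (cyclotomic_ne_zero p ℚ) hqne
      rw [← hq, hdegΦ] at this
      omega
    obtain ⟨a, rfl⟩ : ∃ a, q = Polynomial.C a := ⟨q.coeff 0, Polynomial.eq_C_of_natDegree_eq_zero hqdeg⟩
    -- pick exponent not hit
    have hcard : (Finset.image k Finset.univ).card < p := by
      calc (Finset.image k Finset.univ).card ≤ ℓ := by
            simpa using Finset.card_image_le (f := k) (s := Finset.univ)
        _ < p := hℓp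
    obtain ⟨m, hm⟩ : ∃ m ∈ Finset.range p, m ∉ Finset.image k Finset.univ := by
      by_contra h
      push_neg at h
      have := Finset.card_le_card h
      rw [Finset.card_range] at this
      omega
    have hmp : m < p := Finset.mem_range.mp hm.1
    have hmk : ∀ i, k i ≠ m := by
      intro i hi
      exact hm.2 (Finset.mem_image.mpr ⟨i, Finset.mem_univ i, hi⟩)
    have hPm : P.coeff m = 0 := by
      rw [hP, Polynomial.finset_sum_coeff]
      refine Finset.sum_eq_zero fun i _ => ?_
      rw [Polynomial.coeff_C_mul, Polynomial.coeff_X_pow, if_neg (fun h => hmk i h.symm), mul_zero]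
    have hΦm : (cyclotomic p ℚ).coeff m = 1 := by
      rw [cyclotomic_prime, Polynomial.finset_sum_coeff]
      simp only [Polynomial.coeff_X_pow]
      simp [Finset.mem_range.mpr hmp]
    have ha : a = 0 := by
      have := congrArg (fun r : ℚ[X] => r.coeff m) hq
      simp only [Polynomial.coeff_mul_C, hPm, hΦm, one_mul] at this
      exact this.symm
    rw [ha, map_zero, mul_zero] at hq
    exact hPne hq
end

section
/- Let p be an odd prime and n a natural number divisible by p. Then there exists an element σ in the normalizer N_{S_n}(P) of a Sylow p-subgroup P of S_n with σ ∉ A_n. -/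
/-- Let `p` be an odd prime and `n` a natural number divisible by `p`.
Then there exists an element `σ` of the normalizer in `S_n` of a Sylow `p`-subgroup `P`
with `σ ∉ A_n`. -/
theorem normalizer_of_sylow_not_in_alternating
    (p n : ℕ) [Fact p.Prime] (hodd : Odd p) (hn : 0 < n) (hdvd : p ∣ n)
    (P : Sylow p (Equiv.Perm (Fin n))) :
    ∃ σ : Equiv.Perm (Fin n),
      σ ∈ Subgroup.normalizer ((P : Subgroup (Equiv.Perm (Fin n))) : Set (Equiv.Perm (Fin n))) ∧
      σ ∉ alternatingGroup (Fin n) := by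
  by_contra h
  push_neg at h
  -- P ≤ alternatingGroup
  have hP : (P : Subgroup (Equiv.Perm (Fin n))) ≤ alternatingGroup (Fin n) := by
    intro x hx
    obtain ⟨k, hk⟩ := P.2 ⟨x, hx⟩
    have hk' : x ^ p ^ k = 1 := by
      have := congrArg (Subgroup.subtype _) hk
      simpa using this
    rw [Equiv.Perm.mem_alternatingGroup]
    have hs : (Equiv.Perm.sign x) ^ p ^ k = 1 := by
      rw [← map_pow, hk', map_one]
    obtain ⟨m, hm⟩ := hodd.pow (n := k)
    have hsq : (Equiv.Perm.sign x) ^ 2 = 1 := Int.units_sq _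
    calc Equiv.Perm.sign x = ((Equiv.Perm.sign x) ^ 2) ^ m * Equiv.Perm.sign x := by
          rw [hsq, one_pow, one_mul]
      _ = (Equiv.Perm.sign x) ^ (2 * m + 1) := by rw [← pow_mul, ← pow_succ]
      _ = 1 := by rw [← hm, hs]
  -- normalizer ≤ alternatingGroup
  have hN : Subgroup.normalizer ((P : Subgroup (Equiv.Perm (Fin n))) : Set (Equiv.Perm (Fin n))) ≤ alternatingGroup (Fin n) :=
    fun σ hσ => h σ hσ
  have htop : Subgroup.normalizer ((P : Subgroup (Equiv.Perm (Fin n))) : Set (Equiv.Perm (Fin n))) ⊔ alternatingGroup (Fin n) = ⊤ :=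
    Sylow.normalizer_sup_eq_top' P hP
  have hAll : alternatingGroup (Fin n) = ⊤ := by
    rw [← htop]
    exact le_antisymm le_sup_right (sup_le hN le_rfl)
  -- get an odd permutation: a transposition, using n ≥ 2
  have hp3 : 3 ≤ p := (Fact.out : p.Prime).two_le.lt_of_ne (fun hh => by
    exact absurd (hh ▸ hodd) (by decide)) |>.nat_succ_le
  have hn2 : 2 ≤ n := le_trans (by omega) (Nat.le_of_dvd hn hdvd)
  have h01 : (⟨0, by omega⟩ : Fin n) ≠ ⟨1, by omega⟩ := by
    simp [Fin.ext_iff]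
  have hswap : Equiv.swap (⟨0, by omega⟩ : Fin n) ⟨1, by omega⟩ ∈ alternatingGroup (Fin n) := by
    rw [hAll]; trivial
  rw [Equiv.Perm.mem_alternatingGroup, Equiv.Perm.sign_swap h01] at hswap
  exact (by decide : (-1 : ℤˣ) ≠ 1) hswap
end

section
/- Let λ be a partition of 2^k (k ≥ 2) such that the 2-adic valuation of the degree of the irreducible character χ^λ of S_{2^k} equals 1. Then λ has exactly two hooks of length 2^{k-1}, namely the hooks at positions (1,2) and (2,1), and there exist x ∈ {1, ..., 2^{k-1}−1} and y ∈ {x−1, ..., 2^{k-1}−2} such that λ = (2^{k-1}−x+1, 2^{k-1}−y, 2^{x−1}, 1^{y−x+1}). -/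
namespace PaperNote

/-- `l` is a partition of `n`: a weakly decreasing list of positive integers summing to `n`. -/
def IsPartition (l : List ℕ) (n : ℕ) : Prop :=
  l.Pairwise (· ≥ ·) ∧ (∀ a ∈ l, 0 < a) ∧ l.sum = n

/-- The `j`-th part (0-indexed) of the conjugate partition. -/
def conj (l : List ℕ) (j : ℕ) : ℕ := l.countP (fun a => decide (j < a))

/-- The cells (0-indexed) of the Young diagram of `l`. -/
def cells (l : List ℕ) : Finset (ℕ × ℕ) :=
  (Finset.range l.length ×ˢ Finset.range (l.getD 0 0)).filter (fun p => p.2 < l.getD p.1 0)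

/-- The hook length `h_{i,j}(λ) = λ_i + λ'_j − i − j − 1` (0-indexed `i`, `j`). -/
def hook (l : List ℕ) (i j : ℕ) : ℕ :=
  (l.getD i 0 - j) + (conj l j - i) - 1

/-- The degree of the irreducible character `χ^λ` of `S_n`, by the hook length formula. -/
def charDegree (l : List ℕ) : ℕ :=
  Nat.factorial l.sum / ∏ p ∈ cells l, hook l p.1 p.2

/-- The set `H_e(λ)` of cells whose hook length is divisible by `e`. -/
def hookCells (l : List ℕ) (e : ℕ) : Finset (ℕ × ℕ) :=
  (cells l).filter (fun p => e ∣ hook l p.1 p.2)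

/-- `l` is a hook partition of `n`, i.e. of the form `(n − x, 1^x)`. -/
def IsHookPartition (l : List ℕ) (n : ℕ) : Prop :=
  ∃ x, x ≤ n - 1 ∧ l = (n - x) :: List.replicate x 1

/-- The cells of the skew diagram `[λ ∖ μ]`. -/
def skewCells (lam mu : List ℕ) : Finset (ℕ × ℕ) :=
  (cells lam).filter (fun p => mu.getD p.1 0 ≤ p.2)

/-- `q` comes weakly before `p` in the reading order (right to left, top to bottom). -/
def readsBefore (q p : ℕ × ℕ) : Prop :=
  q.1 < p.1 ∨ (q.1 = p.1 ∧ p.2 ≤ q.2)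

instance : DecidableRel readsBefore := fun q p => by unfold readsBefore; infer_instance

/-- `T` is a Littlewood–Richardson configuration of type `ν` for the skew diagram
`[λ ∖ μ]`: entries are positive, weakly increasing along rows, strictly increasing down
columns, the number of entries equal to `v+1` is `ν_v`, and the word obtained by reading
the entries right to left, top to bottom is a reverse lattice sequence. -/
def IsLRTableau (lam mu nu : List ℕ) (T : ℕ × ℕ → ℕ) : Prop :=
  (∀ p ∈ skewCells lam mu, 1 ≤ T p) ∧
  (∀ i j j', (i, j) ∈ skewCells lam mu → (i, j') ∈ skewCells lam mu → j ≤ j' →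
      T (i, j) ≤ T (i, j')) ∧
  (∀ i i' j, (i, j) ∈ skewCells lam mu → (i', j) ∈ skewCells lam mu → i < i' →
      T (i, j) < T (i', j)) ∧
  (∀ v : ℕ, ((skewCells lam mu).filter (fun p => T p = v + 1)).card = nu.getD v 0) ∧
  (∀ p ∈ skewCells lam mu, ∀ v : ℕ,
    ((skewCells lam mu).filter (fun q => readsBefore q p ∧ T q = v + 2)).card ≤
    ((skewCells lam mu).filter (fun q => readsBefore q p ∧ T q = v + 1)).card)

/-- The partition `Δ²(λ)`: writing the odd parts of `λ` as `2kᵢ+1` and the even parts as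
`2rⱼ`, it is obtained by sorting decreasingly the multiset consisting of `kᵢ+1` for the
larger half of the `kᵢ`, the remaining `kᵢ`, and the `rⱼ` (discarding zero parts). -/
def deltaSq (lam : List ℕ) : List ℕ :=
  let ks := (lam.filter (fun a => decide (a % 2 = 1))).map (fun a => a / 2)
  let rs := (lam.filter (fun a => decide (a % 2 = 0))).map (fun a => a / 2)
  ((((ks.take (ks.length / 2)).map (· + 1)) ++ ks.drop (ks.length / 2) ++ rs).insertionSort
      (· ≥ ·)).filter (fun a => decide (0 < a))

/-- The set of beta-numbers (first-column hook lengths) of the partition `l`. -/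
def betaSet (l : List ℕ) : Finset ℕ :=
  (Finset.range l.length).image (fun i => l.getD i 0 + (l.length - 1 - i))

/-- The Murnaghan–Nakayama recursion, computed on beta-sets: `MN μ B` is the value of the
irreducible character of the symmetric group labelled by the partition with beta-set `B`
at an element of full cycle type `μ`.  Each step removes a rim hook of length `c`
(the head of the cycle type), which on beta-sets replaces `b ∈ B` by `b − c ∉ B`, with sign
`(−1)^(leg length)`, the leg length being the number of elements of `B` strictly between
`b − c` and `b`. -/
def MN : List ℕ → Finset ℕ → ℤ
  | [], _ => 1
  | c :: rest, B =>
    ∑ b ∈ B.filter (fun b => c ≤ b ∧ (b - c) ∉ B),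
      (-1 : ℤ) ^ ((B.filter (fun a => b - c < a ∧ a < b)).card) *
        MN rest (insert (b - c) (B.erase b))


variable {L : List ℕ}

lemma getD_le_of_forall {t : List ℕ} {a : ℕ} (h : ∀ b ∈ t, b ≤ a) (i : ℕ) :
    t.getD i 0 ≤ a := by
  rcases lt_or_ge i t.length with h' | h'
  · rw [List.getD_eq_getElem _ _ h']; exact h _ (t.getElem_mem h')
  · rw [List.getD_eq_default _ _ h']; exact Nat.zero_le _

lemma getD_mono (hs : L.Pairwise (· ≥ ·)) {i i' : ℕ} (h : i ≤ i') :
    L.getD i' 0 ≤ L.getD i 0 := by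
  rcases lt_or_ge i' L.length with h' | h'
  · rcases eq_or_lt_of_le h with rfl | hlt
    · rfl
    · rw [List.getD_eq_getElem _ _ h', List.getD_eq_getElem _ _ (lt_trans hlt h')]
      exact List.pairwise_iff_get.1 hs ⟨i, lt_trans hlt h'⟩ ⟨i', h'⟩ hlt
  · rw [List.getD_eq_default _ _ h']; exact Nat.zero_le _

lemma lt_conj_iff (hs : L.Pairwise (· ≥ ·)) (i j : ℕ) :
    i < conj L j ↔ j < L.getD i 0 := by
  induction L generalizing i with
  | nil => simp [conj]
  | cons a t ih =>
    have hs' : t.Pairwise (· ≥ ·) := hs.of_cons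
    have ha : ∀ b ∈ t, b ≤ a := fun b hb => List.rel_of_pairwise_cons hs hb
    by_cases hja : j < a
    · cases i with
      | zero => simp [conj, List.countP_cons, hja]
      | succ i =>
        have : conj (a :: t) j = conj t j + 1 := by
          simp [conj, List.countP_cons, hja]
        rw [this, List.getD_cons_succ, ← ih hs' i]
        omega
    · have h0 : conj (a :: t) j = 0 := by
        rw [conj, List.countP_eq_zero]
        intro b hb
        simp only [decide_eq_true_eq]
        rcases List.mem_cons.1 hb with rfl | hb
        · omega
        · have := ha b hb; omega
      rw [h0]
      cases i with
      | zero => simp; omega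
      | succ i =>
        rw [List.getD_cons_succ]
        have := getD_le_of_forall ha i
        constructor
        · omega
        · omega

lemma conj_anti (L : List ℕ) {j j' : ℕ} (h : j ≤ j') : conj L j' ≤ conj L j := by
  apply List.countP_mono_left
  intro a _ ha
  simp only [decide_eq_true_eq] at *
  omega

lemma conj_zero (hpos : ∀ a ∈ L, 0 < a) : conj L 0 = L.length := by
  rw [conj, List.countP_eq_length]
  intro a ha
  simpa using hpos a ha

lemma mem_cells_iff (hs : L.Pairwise (· ≥ ·)) (p : ℕ × ℕ) :
    p ∈ cells L ↔ p.2 < L.getD p.1 0 := by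
  unfold cells
  simp only [Finset.mem_filter, Finset.mem_product, Finset.mem_range]
  constructor
  · tauto
  · intro h
    refine ⟨⟨?_, ?_⟩, h⟩
    · by_contra hl
      push_neg at hl
      rw [List.getD_eq_default _ _ hl] at h
      omega
    · exact lt_of_lt_of_le h (getD_mono hs (Nat.zero_le _))

lemma hook_add (hs : L.Pairwise (· ≥ ·)) {i j : ℕ} (h : (i, j) ∈ cells L) :
    hook L i j + (i + j + 1) = L.getD i 0 + conj L j := by
  have h1 : j < L.getD i 0 := (mem_cells_iff hs _).1 h
  have h2 : i < conj L j := (lt_conj_iff hs i j).2 h1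
  unfold hook
  omega

/-- row weak/strict monotonicity plus downward closure in j -/
lemma hook_row (hs : L.Pairwise (· ≥ ·)) {i j j' : ℕ} (hjj : j ≤ j')
    (h : (i, j') ∈ cells L) :
    (i, j) ∈ cells L ∧ hook L i j' + (j' - j) ≤ hook L i j := by
  have h1 : j' < L.getD i 0 := (mem_cells_iff hs _).1 h
  have hm : (i, j) ∈ cells L := (mem_cells_iff hs _).2 (show j < L.getD i 0 by omega)
  have e1 := hook_add hs h
  have e2 := hook_add hs hm
  have := conj_anti L hjj
  exact ⟨hm, by omega⟩

lemma hook_col (hs : L.Pairwise (· ≥ ·)) {i i' j : ℕ} (hii : i ≤ i')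
    (h : (i', j) ∈ cells L) :
    (i, j) ∈ cells L ∧ hook L i' j + (i' - i) ≤ hook L i j := by
  have h1 : j < L.getD i' 0 := (mem_cells_iff hs _).1 h
  have hg := getD_mono hs hii
  have hm : (i, j) ∈ cells L := (mem_cells_iff hs _).2 (show j < L.getD i 0 by omega)
  have e1 := hook_add hs h
  have e2 := hook_add hs hm
  exact ⟨hm, by omega⟩

lemma length_le_sum {t : List ℕ} (hpos : ∀ a ∈ t, 0 < a) : t.length ≤ t.sum := by
  induction t with
  | nil => simp
  | cons a t ih =>
    simp only [List.length_cons, List.sum_cons]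
    have := hpos a (by simp)
    have := ih (fun b hb => hpos b (by simp [hb]))
    omega

lemma sum_ge_cnt {t : List ℕ} (hpos : ∀ a ∈ t, 0 < a) :
    t.length + t.countP (fun a => decide (1 < a)) + t.countP (fun a => decide (2 < a))
      ≤ t.sum := by
  induction t with
  | nil => simp
  | cons a t ih =>
    have h0 := hpos a (by simp)
    have iht := ih (fun b hb => hpos b (by simp [hb]))
    simp only [List.length_cons, List.sum_cons, List.countP_cons]
    by_cases h1 : 1 < a <;> by_cases h2 : 2 < a <;> simp [h1, h2] <;> omega

lemma all_le_two_eq {t : List ℕ} (hs : t.Pairwise (· ≥ ·)) (hpos : ∀ a ∈ t, 0 < a)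
    (hle : ∀ a ∈ t, a ≤ 2) :
    t = List.replicate (t.countP (fun a => decide (1 < a))) 2 ++
        List.replicate (t.length - t.countP (fun a => decide (1 < a))) 1 := by
  induction t with
  | nil => simp
  | cons a t ih =>
    have h0 := hpos a (by simp)
    have h2 := hle a (by simp)
    have hs' := hs.of_cons
    have ha : ∀ b ∈ t, b ≤ a := fun b hb => List.rel_of_pairwise_cons hs hb
    interval_cases a
    · -- a = 1 : everything is 1
      have hall : ∀ b ∈ (1 :: t), b = 1 := by
        intro b hb
        rcases List.mem_cons.1 hb with rfl | hb
        · rfl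
        · have := ha b hb; have := hpos b (by simp [hb]); omega
      have hcnt : (1 :: t).countP (fun a => decide (1 < a)) = 0 := by
        rw [List.countP_eq_zero]
        intro b hb
        have := hall b hb
        simp [this]
      rw [hcnt]
      simpa using List.eq_replicate_of_mem hall
    · -- a = 2
      have := ih hs' (fun b hb => hpos b (by simp [hb])) (fun b hb => hle b (by simp [hb]))
      simp only [List.countP_cons, List.length_cons]
      norm_num
      rw [List.replicate_succ]
      have hle2 : t.countP (fun a => decide (1 < a)) ≤ t.length := List.countP_le_length
      simp only [List.cons_append]
      have hl : t.length + 1 - (List.countP (fun a => decide (1 < a)) t + 1)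
          = t.length - List.countP (fun a => decide (1 < a)) t := by omega
      rw [hl, ← this]

lemma hook_pos (hs : L.Pairwise (· ≥ ·)) {i j : ℕ} (h : (i, j) ∈ cells L) :
    1 ≤ hook L i j := by
  have h1 : j < L.getD i 0 := (mem_cells_iff hs _).1 h
  have h2 : i < conj L j := (lt_conj_iff hs i j).2 h1
  have := hook_add hs h
  omega

lemma conj_one_cons {a b : ℕ} {r : List ℕ} (ha : 1 < a) (hb : 1 < b) :
    conj (a :: b :: r) 1 = r.countP (fun x => decide (1 < x)) + 2 := by
  rw [conj, List.countP_cons, List.countP_cons]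
  simp only [decide_eq_true_eq]
  rw [if_pos hb, if_pos ha]

lemma sum_bound {L : List ℕ} (hs : L.Pairwise (· ≥ ·)) (hpos : ∀ a ∈ L, 0 < a)
    (h11 : ((1 : ℕ), (1 : ℕ)) ∈ cells L) :
    hook L 0 0 + hook L 1 1 ≤ L.sum := by
  have hmem := (mem_cells_iff hs _).1 h11
  rcases L with _ | ⟨a, _ | ⟨b, r⟩⟩
  · simp at hmem
  · simp at hmem
  · simp only [List.getD_cons_succ, List.getD_cons_zero] at hmem
    have hab : b ≤ a := List.rel_of_pairwise_cons hs (a' := b) (by simp)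
    have h00 : ((0 : ℕ), (0 : ℕ)) ∈ cells (a :: b :: r) :=
      (mem_cells_iff hs _).2 (by simp only [List.getD_cons_zero]; omega)
    have e00 := hook_add hs h00
    have e11 := hook_add hs h11
    have c0 : conj (a :: b :: r) 0 = r.length + 2 := by
      rw [conj_zero hpos]; simp
    have c1 := conj_one_cons (r := r) (show 1 < a by omega) hmem
    have hrpos : ∀ c ∈ r, 0 < c := fun c hc => hpos c (by simp [hc])
    have hcnt := sum_ge_cnt hrpos
    simp only [List.getD_cons_zero, List.getD_cons_succ, List.sum_cons] at e00 e11 ⊢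
    omega



end PaperNote

open PaperNote in
/-- Let `λ` be a partition of `2^k` (`k ≥ 2`) with no hook of length
divisible by `2^k` and exactly two hooks of length divisible by `2^{k-1}` (the condition
equivalent to `ν₂(χ^λ(1)) = 1`).  Then the two hooks sit at positions `(1,2)` and `(2,1)`
(0-indexed: `(0,1)` and `(1,0)`), both of length exactly `2^{k-1}`, and, writing
`q = 2^{k-1}`, there are `x ∈ {1,…,q−1}` and `y ∈ {x−1,…,q−2}` with
`λ = (q−x+1, q−y, 2^{x−1}, 1^{y−x+1})`. -/
theorem classification_of_val_two_eq_one_partitions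
    (k : ℕ) (hk : 2 ≤ k) (lam : List ℕ) (hlam : IsPartition lam (2 ^ k))
    (h1 : (hookCells lam (2 ^ k)).card = 0)
    (h2 : (hookCells lam (2 ^ (k - 1))).card = 2) :
    hookCells lam (2 ^ (k - 1)) = {(0, 1), (1, 0)} ∧
    hook lam 0 1 = 2 ^ (k - 1) ∧ hook lam 1 0 = 2 ^ (k - 1) ∧
    ∃ x y : ℕ, 1 ≤ x ∧ x ≤ 2 ^ (k - 1) - 1 ∧ x - 1 ≤ y ∧ y ≤ 2 ^ (k - 1) - 2 ∧
      lam = [2 ^ (k - 1) - x + 1, 2 ^ (k - 1) - y] ++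
        List.replicate (x - 1) 2 ++ List.replicate (y - (x - 1)) 1 := by
  obtain ⟨hs, hpos, hsum⟩ := hlam
  set q := 2 ^ (k - 1) with hq
  have hq2 : 2 ≤ q := by
    rw [hq]
    calc 2 = 2 ^ 1 := rfl
    _ ≤ 2 ^ (k - 1) := Nat.pow_le_pow_right (by norm_num) (by omega)
  have hn : 2 ^ k = 2 * q := by
    rw [hq, ← pow_succ']
    congr 1
    omega
  rw [hn] at hsum h1
  -- no hook divisible by 2q
  have hno : ∀ p ∈ cells lam, ¬ (2 * q ∣ hook lam p.1 p.2) := by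
    intro p hp hdvd
    have hmem : p ∈ hookCells lam (2 * q) := Finset.mem_filter.2 (by exact ⟨hp, hdvd⟩)
    rw [Finset.card_eq_zero.1 h1] at hmem
    simp at hmem
  -- lam nonempty
  have hlen : 0 < lam.length := by
    rcases lam with _ | ⟨a, t⟩
    · simp at hsum; omega
    · simp
  have hl0 : 0 < lam.getD 0 0 := by
    rcases lam with _ | ⟨a, t⟩
    · simp at hlen
    · exact hpos a (by simp)
  have hc00 : ((0, 0) : ℕ × ℕ) ∈ cells lam := (mem_cells_iff hs _).2 hl0
  have hcz : conj lam 0 = lam.length := conj_zero hpos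
  have e00 := hook_add hs hc00
  have hsum_ge : lam.getD 0 0 + lam.length ≤ lam.sum + 1 := by
    rcases lam with _ | ⟨a, t⟩
    · simp at hlen
    · have := length_le_sum (fun b hb => hpos b (List.mem_cons_of_mem _ hb))
      simp only [List.getD_cons_zero, List.length_cons, List.sum_cons]
      omega
  have h00_le : hook lam 0 0 ≤ 2 * q := by omega
  -- every q-hook-cell has hook exactly q
  have hq_eq : ∀ p ∈ hookCells lam q, hook lam p.1 p.2 = q ∧ p ∈ cells lam := by
    intro p hp
    rw [hookCells, Finset.mem_filter] at hp
    obtain ⟨hpc, hdvd⟩ := hp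
    obtain ⟨i, j⟩ := p
    obtain ⟨hmr, hr⟩ := hook_row hs (Nat.zero_le j) hpc
    obtain ⟨hmc, hc⟩ := hook_col hs (Nat.zero_le i) hmr
    have hle2q : hook lam i j ≤ 2 * q := by omega
    have hpos1 : 1 ≤ hook lam i j := hook_pos hs hpc
    obtain ⟨m, hm⟩ := hdvd
    have hm1 : 1 ≤ m := by
      rcases Nat.eq_zero_or_pos m with rfl | h
      · simp at hm; omega
      · exact h
    have : m = 1 ∨ 2 ≤ m := by omega
    rcases this with rfl | hm2
    · exact ⟨by omega, hpc⟩
    · exfalso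
      have : 2 * q ≤ q * m := by
        calc 2 * q = q * 2 := by ring
        _ ≤ q * m := Nat.mul_le_mul_left q hm2
      have heq : hook lam i j = 2 * q := le_antisymm hle2q (by rw [hm]; exact this)
      exact hno (i, j) hpc (heq ▸ ⟨1, by ring⟩)
  obtain ⟨p₁, p₂, hne, hset⟩ := Finset.card_eq_two.1 h2
  have hp₁ : p₁ ∈ hookCells lam q := by rw [hset]; simp
  have hp₂ : p₂ ∈ hookCells lam q := by rw [hset]; simp
  obtain ⟨hk₁, hc₁⟩ := hq_eq p₁ hp₁
  obtain ⟨hk₂, hc₂⟩ := hq_eq p₂ hp₂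
  -- hook (0,0) > q
  have h00_gt : q < hook lam 0 0 := by
    by_contra hle'
    push_neg at hle'
    have key : ∀ p ∈ hookCells lam q, p = ((0 : ℕ), (0 : ℕ)) := by
      intro p hp
      obtain ⟨hpq, hpc⟩ := hq_eq p hp
      obtain ⟨i, j⟩ := p
      obtain ⟨hm0, hrow⟩ := hook_row hs (Nat.zero_le j) hpc
      obtain ⟨hm00, hcol⟩ := hook_col hs (Nat.zero_le i) hm0
      simp only at hpq
      have : i = 0 ∧ j = 0 := by omega
      simp [this.1, this.2]
    have := key p₁ hp₁
    have := key p₂ hp₂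
    exact hne ((key p₁ hp₁).trans (key p₂ hp₂).symm)
  -- each q-cell is on the boundary
  have hbdry : ∀ p ∈ hookCells lam q, (p.1 = 0 ∧ 1 ≤ p.2) ∨ (p.2 = 0 ∧ 1 ≤ p.1) := by
    intro p hp
    obtain ⟨hpq, hpc⟩ := hq_eq p hp
    obtain ⟨i, j⟩ := p
    simp only at hpq ⊢
    by_cases hi : i = 0
    · subst hi
      refine Or.inl ⟨rfl, ?_⟩
      rcases Nat.eq_zero_or_pos j with rfl | h
      · omega
      · exact h
    · by_cases hj : j = 0
      · exact Or.inr ⟨hj, by omega⟩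
      · exfalso
        obtain ⟨hm1, hr1⟩ := hook_row hs (show 1 ≤ j by omega) hpc
        obtain ⟨hm11, hcc1⟩ := hook_col hs (show 1 ≤ i by omega) hm1
        have hb := sum_bound hs hpos hm11
        omega
  -- the two q-cells: one in row 0, one in column 0
  have hpair : ∃ a b : ℕ, 1 ≤ a ∧ 1 ≤ b ∧
      hookCells lam q = {((0 : ℕ), b), (a, (0 : ℕ))} ∧
      hook lam 0 b = q ∧ hook lam a 0 = q ∧
      ((0, b) : ℕ × ℕ) ∈ cells lam ∧ ((a, 0) : ℕ × ℕ) ∈ cells lam := by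
    obtain ⟨i₁, j₁⟩ := p₁
    obtain ⟨i₂, j₂⟩ := p₂
    simp only at hk₁ hk₂
    rcases hbdry _ hp₁ with ⟨hi1, hj1⟩ | ⟨hj1, hi1⟩ <;>
      rcases hbdry _ hp₂ with ⟨hi2, hj2⟩ | ⟨hj2, hi2⟩ <;>
      simp only at hi1 hj1 hi2 hj2
    · -- both in row 0 : impossible
      exfalso
      subst hi1; subst hi2
      have hjj : j₁ ≠ j₂ := fun h => hne (by rw [h])
      rcases lt_trichotomy j₁ j₂ with h | h | h
      · obtain ⟨_, hr⟩ := hook_row hs (le_of_lt h) hc₂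
        omega
      · exact hjj h
      · obtain ⟨_, hr⟩ := hook_row hs (le_of_lt h) hc₁
        omega
    · subst hi1; subst hj2
      exact ⟨i₂, j₁, hi2, hj1, hset, hk₁, hk₂, hc₁, hc₂⟩
    · subst hj1; subst hi2
      refine ⟨i₁, j₂, hi1, hj2, ?_, hk₂, hk₁, hc₂, hc₁⟩
      rw [hset, Finset.pair_comm]
    · -- both in column 0 : impossible
      exfalso
      subst hj1; subst hj2
      have hii : i₁ ≠ i₂ := fun h => hne (by rw [h])
      rcases lt_trichotomy i₁ i₂ with h | h | h
      · obtain ⟨_, hr⟩ := hook_col hs (le_of_lt h) hc₂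
        omega
      · exact hii h
      · obtain ⟨_, hr⟩ := hook_col hs (le_of_lt h) hc₁
        omega
  obtain ⟨a', b', ha1, hb1, hsetq, hkb, hka, hcb, hca⟩ := hpair
  -- lam has at least 2 rows and first part ≥ 2
  have hA2 : 2 ≤ lam.getD 0 0 := by
    have := (mem_cells_iff hs _).1 hcb
    simp only at this
    omega
  have hlen2 : 2 ≤ lam.length := by
    have h0 := (mem_cells_iff hs _).1 hca
    simp only at h0
    by_contra hl
    push_neg at hl
    have : lam.getD a' 0 = 0 := List.getD_eq_default _ _ (by omega)
    omega
  rcases lam with _ | ⟨A, _ | ⟨B, r⟩⟩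
  · simp at hlen2
  · simp at hlen2
  · -- notation
    have hAB : B ≤ A := List.rel_of_pairwise_cons hs (a' := B) (by simp)
    have hrpos : ∀ c ∈ r, 0 < c := fun c hc => hpos c (by simp [hc])
    simp only [List.getD_cons_zero] at hA2
    -- second part ≥ 2
    have hB2 : 2 ≤ B := by
      by_contra hB
      push_neg at hB
      have hB1 : B = 1 := by
        have := hpos B (by simp)
        omega
      have hall : ∀ c ∈ r, c = 1 := by
        intro c hc
        have h1 := List.rel_of_pairwise_cons hs.of_cons hc
        have h2 := hrpos c hc
        omega
      have hrs : r.sum = r.length := by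
        conv_lhs => rw [List.eq_replicate_of_mem hall]
        simp
      have hsum' : (A :: B :: r).sum = A + 1 + r.length := by
        simp only [List.sum_cons, hB1, hrs]
        omega
      have h00 : hook (A :: B :: r) 0 0 = 2 * q := by
        simp only [List.getD_cons_zero, hcz, List.length_cons] at e00
        omega
      exact hno (0, 0) hc00 (h00 ▸ ⟨1, by ring⟩)
    have h11c : ((1 : ℕ), (1 : ℕ)) ∈ cells (A :: B :: r) :=
      (mem_cells_iff hs _).2 (by simp only [List.getD_cons_succ, List.getD_cons_zero]; omega)
    have h01c : ((0 : ℕ), (1 : ℕ)) ∈ cells (A :: B :: r) :=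
      (mem_cells_iff hs _).2 (by simp only [List.getD_cons_zero]; omega)
    have h10c : ((1 : ℕ), (0 : ℕ)) ∈ cells (A :: B :: r) :=
      (mem_cells_iff hs _).2 (by simp only [List.getD_cons_succ, List.getD_cons_zero]; omega)
    have e01 := hook_add hs h01c
    have e10 := hook_add hs h10c
    have c0 : conj (A :: B :: r) 0 = r.length + 2 := by
      rw [hcz]; simp
    set m := r.countP (fun x => decide (1 < x)) with hm
    have c1 : conj (A :: B :: r) 1 = m + 2 :=
      conj_one_cons (r := r) (by omega) (by omega)
    have hcnt := sum_ge_cnt hrpos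
    have hsum' : A + B + r.sum = 2 * q := by
      simp only [List.sum_cons] at hsum
      omega
    -- lower bounds for the hooks at (0,1) and (1,0)
    obtain ⟨_, hge01⟩ := hook_row hs hb1 hcb
    obtain ⟨_, hge10⟩ := hook_col hs ha1 hca
    simp only [List.getD_cons_zero, List.getD_cons_succ] at e01 e10
    rw [c1] at e01
    rw [c0] at e10
    have hk01 : hook (A :: B :: r) 0 1 = q := by omega
    have hk10 : hook (A :: B :: r) 1 0 = q := by omega
    have hcnt2 : r.countP (fun x => decide (2 < x)) = 0 := by omega
    have hrsum : r.sum = r.length + m := by omega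
    -- positions are exactly (0,1) and (1,0)
    have hb'1 : b' = 1 := by omega
    have ha'1 : a' = 1 := by omega
    subst hb'1; subst ha'1
    refine ⟨hsetq, hk01, hk10, m + 1, r.length, by omega, by omega, by omega, by omega, ?_⟩
    have hrle2 : ∀ c ∈ r, c ≤ 2 := by
      intro c hc
      have := List.countP_eq_zero.1 hcnt2 c hc
      simp only [decide_eq_true_eq] at this
      omega
    have hrstruct := all_le_two_eq hs.of_cons.of_cons hrpos hrle2
    have e1 : q - (m + 1) + 1 = A := by omega
    have e2 : q - r.length = B := by omega
    have e3 : m + 1 - 1 = m := by omega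
    simp only [List.cons_append, List.nil_append]
    rw [e1, e2, e3]
    conv_lhs => rw [hrstruct]
end

section
/- Let q ≥ 2, let x ∈ {1,...,q−1}, y ∈ {x−1,...,q−2}, set s = y − (x−1) and suppose s is even. Let λ = (q−x+1, q−y, 2^{x−1}, 1^{s}) (a partition of 2q) and μ = (q−y+s/2, 1^{y−s/2}) (a hook partition of q). Then the Littlewood–Richardson coefficient c^λ_{μ,μ} is positive; equivalently, χ^μ × χ^μ appears in the restriction of χ^λ from S_{2q} to S_q × S_q. -/
namespace PaperNote

section Main
variable (a t u : ℕ)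

def lamL : List ℕ := [2*t+u+2, u+2] ++ List.replicate a 2 ++ List.replicate (2*t) 1
def muL : List ℕ := (t+u+2) :: List.replicate (a+t) 1

lemma getD_lamL (i : ℕ) : (lamL a t u).getD i 0 =
    if i = 0 then 2*t+u+2 else if i = 1 then u+2 else if i < a+2 then 2
    else if i < a+2*t+2 then 1 else 0 := by
  match i with
  | 0 => rfl
  | 1 => rfl
  | (n+2) =>
    simp [lamL, List.getD, List.getElem?_append, List.getElem?_replicate, Option.getD]
    split_ifs <;> first | rfl | omega

lemma getD_muL (i : ℕ) : (muL a t u).getD i 0 =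
    if i = 0 then t+u+2 else if i < a+t+1 then 1 else 0 := by
  match i with
  | 0 => rfl
  | (n+1) =>
    simp [muL, List.getD, List.getElem?_replicate, Option.getD]
    split_ifs <;> rfl

lemma length_lamL : (lamL a t u).length = a + 2*t + 2 := by simp [lamL]

lemma mem_skew (i j : ℕ) : ((i, j) ∈ skewCells (lamL a t u) (muL a t u)) ↔
    ((i = 0 ∧ t+u+2 ≤ j ∧ j < 2*t+u+2) ∨
     (i = 1 ∧ (1 ≤ j ∨ a+t = 0) ∧ j < u+2) ∨
     (2 ≤ i ∧ i ≤ a+1 ∧ j = 1) ∨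
     (a+t+1 ≤ i ∧ i ≤ a+2*t+1 ∧ j = 0)) := by
  unfold skewCells cells
  simp only [Finset.mem_filter, Finset.mem_product, Finset.mem_range, length_lamL,
    getD_lamL, getD_muL]
  split_ifs <;> omega

end Main

section Main2
variable (a t u : ℕ)

/-- The LR filling. -/
def TT (a t : ℕ) : ℕ × ℕ → ℕ := fun p =>
  if p.1 ≤ 1 then 1 else if 1 ≤ p.2 then p.1 else if p.1 = a+t+1 then 1 else p.1 - t

lemma TT_val (i j : ℕ) : TT a t (i, j) =
    if i ≤ 1 then 1 else if 1 ≤ j then i else if i = a+t+1 then 1 else i - t := rfl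

lemma count_one (h1 : 1 ≤ a + t) :
    ((skewCells (lamL a t u) (muL a t u)).filter (fun p => TT a t p = 1)).card = t+u+2 := by
  classical
  have hset : (skewCells (lamL a t u) (muL a t u)).filter (fun p => TT a t p = 1) =
      (Finset.range (t+u+2)).image (fun k =>
        if k < t then ((0:ℕ), t+u+2+k) else if k < t+u+1 then (1, k-t+1) else (a+t+1, 0)) := by
    ext ⟨i, j⟩
    simp only [Finset.mem_filter, mem_skew, Finset.mem_image, Finset.mem_range, TT_val]
    constructor
    · rintro ⟨hmem, hT⟩
      rcases hmem with ⟨rfl, h2, h3⟩ | ⟨rfl, h2, h3⟩ | ⟨h2, h3, rfl⟩ | ⟨h2, h3, rfl⟩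
      · exact ⟨j - (t+u+2), by omega, by rw [if_pos (by omega)]; simp; omega⟩
      · exact ⟨t + (j-1), by omega, by rw [if_neg (by omega), if_pos (by omega)]; simp; omega⟩
      · exfalso; rw [if_neg (by omega), if_pos (by omega)] at hT; omega
      · have hi : i = a+t+1 := by
          by_contra hne
          rw [if_neg (by omega), if_neg (by omega), if_neg hne] at hT; omega
        exact ⟨t+u+1, by omega, by rw [if_neg (by omega), if_neg (by omega)]; simp [hi]⟩
    · rintro ⟨k, hk, hf⟩
      split_ifs at hf <;> rw [Prod.mk.injEq] at hf <;> obtain ⟨rfl, rfl⟩ := hf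
      · exact ⟨by left; exact ⟨rfl, by omega, by omega⟩, by rw [if_pos (by omega)]⟩
      · exact ⟨by right; left; exact ⟨rfl, by omega, by omega⟩, by rw [if_pos (by omega)]⟩
      · exact ⟨by right; right; right; exact ⟨by omega, by omega, rfl⟩,
          by rw [if_neg (by omega), if_neg (by omega), if_pos rfl]⟩
  rw [hset, Finset.card_image_of_injOn, Finset.card_range]
  intro k hk k' hk' heq
  simp only [Finset.coe_range, Set.mem_Iio] at hk hk'
  dsimp only at heq
  split_ifs at heq <;> rw [Prod.mk.injEq] at heq <;> omega

lemma count_one' (h0 : a + t = 0) :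
    ((skewCells (lamL a t u) (muL a t u)).filter (fun p => TT a t p = 1)).card = t+u+2 := by
  classical
  have hset : (skewCells (lamL a t u) (muL a t u)).filter (fun p => TT a t p = 1) =
      (Finset.range (u+2)).image (fun k => ((1:ℕ), k)) := by
    ext ⟨i, j⟩
    simp only [Finset.mem_filter, mem_skew, Finset.mem_image, Finset.mem_range, TT_val,
      Prod.mk.injEq]
    constructor
    · rintro ⟨hmem, hT⟩
      rcases hmem with ⟨rfl, h2, h3⟩ | ⟨rfl, h2, h3⟩ | ⟨h2, h3, rfl⟩ | ⟨h2, h3, rfl⟩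
      · exact absurd h2 (by omega)
      · exact ⟨j, by omega, rfl, rfl⟩
      · exact absurd h2 (by omega)
      · exact ⟨0, by omega, by omega, rfl⟩
    · rintro ⟨k, hk, rfl, rfl⟩
      exact ⟨by right; left; exact ⟨rfl, by omega, by omega⟩, by rw [if_pos (by omega)]⟩
  rw [hset, Finset.card_image_of_injOn, Finset.card_range]
  · omega
  · intro k hk k' hk' heq
    rw [Prod.mk.injEq] at heq
    exact heq.2

lemma count_mid (v : ℕ) (h1 : 1 ≤ v) (h2 : v ≤ a) :
    (skewCells (lamL a t u) (muL a t u)).filter (fun p => TT a t p = v + 1) = {(v+1, 1)} := by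
  classical
  ext ⟨i, j⟩
  simp only [Finset.mem_filter, mem_skew, Finset.mem_singleton, TT_val, Prod.mk.injEq]
  constructor
  · rintro ⟨hmem, hT⟩
    rcases hmem with ⟨rfl, h3, h4⟩ | ⟨rfl, h3, h4⟩ | ⟨h3, h4, rfl⟩ | ⟨h3, h4, rfl⟩
    · rw [if_pos (by omega)] at hT; omega
    · rw [if_pos (by omega)] at hT; omega
    · rw [if_neg (by omega), if_pos (by omega)] at hT; omega
    · by_cases hi : i = a+t+1
      · rw [if_neg (by omega), if_neg (by omega), if_pos hi] at hT; omega
      · rw [if_neg (by omega), if_neg (by omega), if_neg hi] at hT; omega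
  · rintro ⟨rfl, rfl⟩
    exact ⟨by right; right; left; exact ⟨by omega, by omega, rfl⟩,
      by rw [if_neg (by omega), if_pos (by omega)]⟩

lemma count_high (v : ℕ) (h1 : a + 1 ≤ v) (h2 : v ≤ a + t) :
    (skewCells (lamL a t u) (muL a t u)).filter (fun p => TT a t p = v + 1) = {(v+1+t, 0)} := by
  classical
  ext ⟨i, j⟩
  simp only [Finset.mem_filter, mem_skew, Finset.mem_singleton, TT_val, Prod.mk.injEq]
  constructor
  · rintro ⟨hmem, hT⟩
    rcases hmem with ⟨rfl, h3, h4⟩ | ⟨rfl, h3, h4⟩ | ⟨h3, h4, rfl⟩ | ⟨h3, h4, rfl⟩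
    · rw [if_pos (by omega)] at hT; omega
    · rw [if_pos (by omega)] at hT; omega
    · rw [if_neg (by omega), if_pos (by omega)] at hT; omega
    · by_cases hi : i = a+t+1
      · rw [if_neg (by omega), if_neg (by omega), if_pos hi] at hT; omega
      · rw [if_neg (by omega), if_neg (by omega), if_neg hi] at hT; omega
  · rintro ⟨rfl, rfl⟩
    refine ⟨by right; right; right; exact ⟨by omega, by omega, rfl⟩, ?_⟩
    rw [if_neg (by omega), if_neg (by omega), if_neg (by omega)]
    omega

lemma count_zero (v : ℕ) (h1 : 1 ≤ v) (h2 : a + t < v) :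
    (skewCells (lamL a t u) (muL a t u)).filter (fun p => TT a t p = v + 1) = ∅ := by
  classical
  ext ⟨i, j⟩
  simp only [Finset.mem_filter, mem_skew, Finset.notMem_empty, iff_false, not_and, TT_val]
  rintro (⟨rfl, h3, h4⟩ | ⟨rfl, h3, h4⟩ | ⟨h3, h4, rfl⟩ | ⟨h3, h4, rfl⟩)
  · rw [if_pos (by omega)]; omega
  · rw [if_pos (by omega)]; omega
  · rw [if_neg (by omega), if_pos (by omega)]; omega
  · by_cases hil : i ≤ 1
    · rw [if_pos hil]; omega
    · by_cases hi : i = a+t+1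
      · rw [if_neg hil, if_neg (by omega), if_pos hi]; omega
      · rw [if_neg hil, if_neg (by omega), if_neg hi]; omega

lemma hcount (v : ℕ) :
    ((skewCells (lamL a t u) (muL a t u)).filter (fun p => TT a t p = v + 1)).card
      = (muL a t u).getD v 0 := by
  rw [getD_muL]
  rcases Nat.eq_zero_or_pos v with rfl | hv
  · rw [if_pos rfl]
    rcases Nat.eq_zero_or_pos (a+t) with h0 | h0
    · exact count_one' a t u h0
    · exact count_one a t u h0
  · rw [if_neg (by omega)]
    by_cases hva : v ≤ a
    · rw [count_mid a t u v hv hva, if_pos (by omega), Finset.card_singleton]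
    · by_cases hvt : v ≤ a + t
      · rw [count_high a t u v (by omega) hvt, if_pos (by omega), Finset.card_singleton]
      · rw [count_zero a t u v hv (by omega), if_neg (by omega), Finset.card_empty]

end Main2

section Main3
variable (a t u : ℕ)

lemma exists_LR : ∃ T, IsLRTableau (lamL a t u) (muL a t u) (muL a t u) T := by
  classical
  refine ⟨TT a t, ?_, ?_, ?_, hcount a t u, ?_⟩
  · rintro ⟨i, j⟩ hp
    rw [mem_skew] at hp
    rw [TT_val]
    split_ifs <;> omega
  · intro i j j' hp hp' hjj
    rw [mem_skew] at hp hp'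
    rw [TT_val, TT_val]
    split_ifs <;> omega
  · intro i i' j hp hp' hii
    rw [mem_skew] at hp hp'
    rw [TT_val, TT_val]
    split_ifs <;> omega
  · rintro ⟨pi, pj⟩ hp v
    have hA : ((skewCells (lamL a t u) (muL a t u)).filter
        (fun q => readsBefore q (pi, pj) ∧ TT a t q = v + 2)).card ≤ 1 := by
      have hsub : ((skewCells (lamL a t u) (muL a t u)).filter
          (fun q => readsBefore q (pi, pj) ∧ TT a t q = v + 2)).card ≤
          ((skewCells (lamL a t u) (muL a t u)).filter (fun q => TT a t q = v + 2)).card := by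
        apply Finset.card_le_card
        intro q hq
        rw [Finset.mem_filter] at hq ⊢
        exact ⟨hq.1, hq.2.2⟩
      have hc2 : ((skewCells (lamL a t u) (muL a t u)).filter
          (fun q => TT a t q = v + 2)).card = _ := hcount a t u (v + 1)
      rw [getD_muL] at hc2
      have : ((skewCells (lamL a t u) (muL a t u)).filter
          (fun q => TT a t q = v + 2)).card ≤ 1 := by
        rw [hc2, if_neg (Nat.succ_ne_zero v)]
        split_ifs <;> omega
      calc ((skewCells (lamL a t u) (muL a t u)).filter
          (fun q => readsBefore q (pi, pj) ∧ TT a t q = v + 2)).card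
          ≤ _ := hsub
        _ ≤ 1 := this
    rcases Finset.eq_empty_or_nonempty ((skewCells (lamL a t u) (muL a t u)).filter
        (fun q => readsBefore q (pi, pj) ∧ TT a t q = v + 2)) with he | ⟨⟨qi, qj⟩, hq⟩
    · rw [he]; simp
    · rw [Finset.mem_filter] at hq
      obtain ⟨hqS, hqb, hqT⟩ := hq
      rw [mem_skew] at hqS
      rw [TT_val] at hqT
      have hkey : v + 2 ≤ a + t + 1 ∧ v + 2 ≤ qi ∧ (qi ≤ a + 1 ∨ qi = v + 2 + t) := by
        revert hqT; split_ifs <;> intro hqT <;> omega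
      have hqp : qi ≤ pi := by
        rcases hqb with h | ⟨h, _⟩
        · exact le_of_lt h
        · exact le_of_eq h
      set c : ℕ × ℕ := if v = 0 then (1, 1) else if v + 1 ≤ a + 1 then (v + 1, 1)
        else (v + 1 + t, 0) with hcdef
      have hcmem : c ∈ (skewCells (lamL a t u) (muL a t u)).filter
          (fun q => readsBefore q (pi, pj) ∧ TT a t q = v + 1) := by
        rw [Finset.mem_filter, hcdef]
        split_ifs with h h'
        · subst h
          refine ⟨by rw [mem_skew]; right; left; exact ⟨rfl, by omega, by omega⟩, ?_, ?_⟩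
          · exact Or.inl (by simp only; omega)
          · rw [TT_val]; rw [if_pos (by omega)]
        · refine ⟨by rw [mem_skew]; right; right; left; exact ⟨by omega, h', rfl⟩, ?_, ?_⟩
          · exact Or.inl (by simp only; omega)
          · rw [TT_val, if_neg (by omega), if_pos (by omega)]
        · refine ⟨by rw [mem_skew]; right; right; right; exact ⟨by omega, by omega, rfl⟩, ?_, ?_⟩
          · refine Or.inl (by simp only; omega)
          · rw [TT_val, if_neg (by omega), if_neg (by omega), if_neg (by omega)]
            omega
      calc ((skewCells (lamL a t u) (muL a t u)).filter
          (fun q => readsBefore q (pi, pj) ∧ TT a t q = v + 2)).card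
          ≤ 1 := hA
        _ ≤ _ := Nat.one_le_iff_ne_zero.mpr (by
            intro h0
            rw [Finset.card_eq_zero] at h0
            rw [h0] at hcmem
            exact Finset.notMem_empty _ hcmem)

end Main3


end PaperNote

open PaperNote in
/-- Let `q ≥ 2`, `x ∈ {1,…,q−1}`, `y ∈ {x−1,…,q−2}`, `s = y−(x−1)` even,
`λ = (q−x+1, q−y, 2^{x−1}, 1^s)` and `μ = (q−y+s/2, 1^{y−s/2})`.  Then the
Littlewood–Richardson coefficient `c^λ_{μ,μ}` is positive, i.e. there exists a
Littlewood–Richardson configuration of type `μ` for `[λ ∖ μ]`. -/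
theorem lr_coefficient_mu_positive_even_case
    (q x y : ℕ) (hq : 2 ≤ q) (hx1 : 1 ≤ x) (hxq : x ≤ q - 1)
    (hyx : x - 1 ≤ y) (hyq : y ≤ q - 2) (hs : Even (y - (x - 1))) :
    ∃ T : ℕ × ℕ → ℕ,
      IsLRTableau
        ([q - x + 1, q - y] ++ List.replicate (x - 1) 2 ++ List.replicate (y - (x - 1)) 1)
        ((q - y + (y - (x - 1)) / 2) :: List.replicate (y - (y - (x - 1)) / 2) 1)
        ((q - y + (y - (x - 1)) / 2) :: List.replicate (y - (y - (x - 1)) / 2) 1) T := by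
  
  obtain ⟨a, rfl⟩ : ∃ a, x = a + 1 := ⟨x - 1, by omega⟩
  obtain ⟨t, ht⟩ : ∃ t, y - (a + 1 - 1) = t + t := hs
  have hya : a ≤ y := by omega
  obtain ⟨u, hu⟩ : ∃ u, q = y + 2 + u := ⟨q - (y + 2), by omega⟩
  have e5 : q - y + (y - (a + 1 - 1)) / 2 = t + u + 2 := by omega
  have e6 : y - (y - (a + 1 - 1)) / 2 = a + t := by omega
  rw [e5, e6]
  have e1 : q - (a + 1) + 1 = 2 * t + u + 2 := by omega
  have e2 : q - y = u + 2 := by omega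
  have e4 : y - (a + 1 - 1) = 2 * t := by omega
  have e3 : a + 1 - 1 = a := by omega
  rw [e1, e2, e4, e3]
  exact exists_LR a t u
end

section
/- Let q ≥ 2, let x ∈ {1,...,q−1}, y ∈ {x−1,...,q−2}, set s = y − (x−1) and suppose s is even. Let λ = (q−x+1, q−y, 2^{x−1}, 1^{s}) and ν = (q−y+s/2−1, 1^{y−s/2+1}). Then the Littlewood–Richardson coefficient c^λ_{ν,ν} is positive. -/
namespace LRAuxE
open PaperNote

def lamA (b h t : ℕ) : List ℕ :=
  [b+2*h+2, b+2] ++ List.replicate t 2 ++ List.replicate (2*h) 1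

def muA (b h t : ℕ) : List ℕ := (b+h+1) :: List.replicate (t+h+1) 1

def TA (b h t : ℕ) : ℕ × ℕ → ℕ := fun p =>
  if p.1 = 0 then 1 else if p.1 = 1 then (if p.2 = b+1 then 2 else 1)
  else if p.1 ≤ t+1 then p.1 + 1 else p.1 + 1 - h

lemma getD_lamA (b h t i : ℕ) :
    (lamA b h t).getD i 0
      = if i = 0 then b+2*h+2 else if i = 1 then b+2 else if i ≤ t+1 then 2
        else if i ≤ t+2*h+1 then 1 else 0 := by
  rcases i with _ | _ | i
  · simp [lamA]
  · simp [lamA]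
  · rw [lamA, List.getD_eq_getElem?_getD]
    simp only [List.cons_append, List.getElem?_cons_succ, List.nil_append,
      List.getElem?_append, List.getElem?_replicate, List.length_replicate]
    split_ifs <;> simp_all <;> omega

lemma getD_muA (b h t i : ℕ) :
    (muA b h t).getD i 0 = if i = 0 then b+h+1 else if i ≤ t+h+1 then 1 else 0 := by
  rcases i with _ | i
  · simp [muA]
  · rw [muA, List.getD_eq_getElem?_getD]
    simp only [List.getElem?_cons_succ, List.getElem?_replicate]
    split_ifs <;> simp_all <;> omega

lemma length_lamA (b h t : ℕ) : (lamA b h t).length = t + 2*h + 2 := by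
  simp [lamA]

lemma mem_skewA (b h t : ℕ) (p : ℕ × ℕ) :
    p ∈ skewCells (lamA b h t) (muA b h t) ↔
      (p.1 = 0 ∧ b+h+1 ≤ p.2 ∧ p.2 ≤ b+2*h+1) ∨
      (p.1 = 1 ∧ 1 ≤ p.2 ∧ p.2 ≤ b+1) ∨
      (2 ≤ p.1 ∧ p.1 ≤ t+1 ∧ p.2 = 1) ∨
      (t+h+2 ≤ p.1 ∧ p.1 ≤ t+2*h+1 ∧ p.2 = 0) := by
  obtain ⟨i, j⟩ := p
  simp only [skewCells, cells, Finset.mem_filter, Finset.mem_product, Finset.mem_range,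
    getD_lamA, getD_muA, length_lamA]
  split_ifs <;> omega

open PaperNote

lemma TA_eval (b h t i j : ℕ) :
    TA b h t (i, j) = if i = 0 then 1 else if i = 1 then (if j = b+1 then 2 else 1)
      else if i ≤ t+1 then i + 1 else i + 1 - h := rfl

lemma card_value_le_one (b h t k : ℕ) (hk : 2 ≤ k) :
    ((skewCells (lamA b h t) (muA b h t)).filter (fun p => TA b h t p = k)).card ≤ 1 := by
  rw [Finset.card_le_one]
  rintro ⟨a1, a2⟩ ha ⟨b1, b2⟩ hb
  rw [Finset.mem_filter, mem_skewA] at ha hb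
  simp only [TA] at ha hb
  rw [Prod.mk.injEq]
  split_ifs at ha hb <;> omega

lemma exists_cell (b h t k : ℕ) (hk2 : 2 ≤ k) (hk : k ≤ t+h+2) :
    ∃ c ∈ skewCells (lamA b h t) (muA b h t), TA b h t c = k := by
  rcases lt_or_ge k 3 with h3 | h3
  · exact ⟨(1, b+1), by rw [mem_skewA]; dsimp only; omega, by rw [TA_eval]; split_ifs <;> (try simp_all) <;> omega⟩
  rcases le_or_gt k (t+2) with h4 | h4
  · exact ⟨(k-1, 1), by rw [mem_skewA]; dsimp only; omega,
      by rw [TA_eval]; split_ifs <;> omega⟩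
  · exact ⟨(k+h-1, 0), by rw [mem_skewA]; dsimp only; omega,
      by rw [TA_eval]; split_ifs <;> (try simp_all) <;> omega⟩

lemma value_le (b h t : ℕ) (p : ℕ × ℕ) (hp : p ∈ skewCells (lamA b h t) (muA b h t)) :
    TA b h t p ≤ t + h + 2 := by
  rw [mem_skewA] at hp
  simp only [TA]
  split_ifs <;> omega

lemma value_pos (b h t : ℕ) (p : ℕ × ℕ) (hp : p ∈ skewCells (lamA b h t) (muA b h t)) :
    1 ≤ TA b h t p := by
  rw [mem_skewA] at hp
  simp only [TA]
  split_ifs <;> omega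

/-- For every cell of value `k+1 ≥ 2` there is a cell of value `k` in a strictly
earlier row. -/
lemma key (b h t k : ℕ) (hk : 1 ≤ k) (q0 : ℕ × ℕ)
    (hq0 : q0 ∈ skewCells (lamA b h t) (muA b h t)) (hT : TA b h t q0 = k + 1) :
    ∃ c ∈ skewCells (lamA b h t) (muA b h t), TA b h t c = k ∧ c.1 < q0.1 := by
  have hrow : (q0.1 = 1 ∧ k = 1) ∨ (q0.1 = k ∧ 2 ≤ k ∧ k ≤ t+1) ∨
      (q0.1 = k+h ∧ t+2 ≤ k ∧ k ≤ t+h+1) := by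
    rw [mem_skewA] at hq0
    simp only [TA] at hT
    split_ifs at hT <;> omega
  rcases lt_or_ge k 2 with h2 | h2
  · refine ⟨(0, b+h+1), by rw [mem_skewA]; dsimp only; omega, ?_, ?_⟩
    · rw [TA_eval]; split_ifs <;> (try simp_all) <;> omega
    · show 0 < q0.1; omega
  rcases lt_or_ge k 3 with h3 | h3
  · refine ⟨(1, b+1), by rw [mem_skewA]; dsimp only; omega, ?_, ?_⟩
    · rw [TA_eval]; split_ifs <;> (try simp_all) <;> omega
    · show 1 < q0.1; omega
  rcases le_or_gt k (t+2) with h4 | h4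
  · refine ⟨(k-1, 1), by rw [mem_skewA]; dsimp only; omega, ?_, ?_⟩
    · rw [TA_eval]; split_ifs <;> omega
    · show k-1 < q0.1; omega
  · refine ⟨(k+h-1, 0), by rw [mem_skewA]; dsimp only; omega, ?_, ?_⟩
    · rw [TA_eval]; split_ifs <;> (try simp_all) <;> omega
    · show k+h-1 < q0.1; omega

open PaperNote

theorem auxLR (b h t : ℕ) :
    IsLRTableau (lamA b h t) (muA b h t) (muA b h t) (TA b h t) := by
  refine ⟨value_pos b h t, ?_, ?_, ?_, ?_⟩
  · -- rows weakly increasing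
    intro i j j' hj hj' hle
    rw [mem_skewA] at hj hj'
    rw [TA_eval, TA_eval]
    split_ifs <;> (try simp_all) <;> omega
  · -- columns strictly increasing
    intro i i' j hij hij' hlt
    rw [mem_skewA] at hij hij'
    rw [TA_eval, TA_eval]
    split_ifs <;> (try simp_all) <;> omega
  · -- content
    intro v
    rw [getD_muA]
    rcases Nat.eq_zero_or_pos v with rfl | hv
    · have hset : ((skewCells (lamA b h t) (muA b h t)).filter
          (fun p => TA b h t p = 0 + 1)) =
          (({0} : Finset ℕ) ×ˢ Finset.Icc (b+h+1) (b+2*h+1)) ∪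
          (({1} : Finset ℕ) ×ˢ Finset.Icc 1 b) := by
        ext ⟨i, j⟩
        rw [Finset.mem_filter, mem_skewA, TA_eval]
        simp only [Finset.mem_union, Finset.mem_product, Finset.mem_singleton, Finset.mem_Icc]
        split_ifs <;> (try simp_all) <;> omega
      rw [hset, Finset.card_union_of_disjoint, Finset.card_product, Finset.card_product]
      · simp [Nat.card_Icc]
        omega
      · rw [Finset.disjoint_left]
        rintro ⟨i, j⟩ hm hm'
        simp only [Finset.mem_product, Finset.mem_singleton] at hm hm'
        omega
    rcases le_or_gt v (t+h+1) with hv2 | hv2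
    · have h1 := card_value_le_one b h t (v+1) (by omega)
      have h2 : 0 < ((skewCells (lamA b h t) (muA b h t)).filter
          (fun p => TA b h t p = v + 1)).card := by
        obtain ⟨c, hc, hTc⟩ := exists_cell b h t (v+1) (by omega) (by omega)
        exact Finset.card_pos.mpr ⟨c, Finset.mem_filter.mpr ⟨hc, hTc⟩⟩
      split_ifs <;> omega
    · have hset : ((skewCells (lamA b h t) (muA b h t)).filter
          (fun p => TA b h t p = v + 1)) = ∅ := by
        rw [Finset.filter_eq_empty_iff]
        intro p hp
        have := value_le b h t p hp
        omega
      rw [hset]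
      simp only [Finset.card_empty]
      split_ifs <;> omega
  · -- lattice word condition
    intro p hp v
    by_cases h0 : ((skewCells (lamA b h t) (muA b h t)).filter
        (fun q => readsBefore q p ∧ TA b h t q = v + 2)).card = 0
    · rw [h0]; exact Nat.zero_le _
    obtain ⟨q0, hq0⟩ := Finset.card_pos.mp (Nat.pos_of_ne_zero h0)
    rw [Finset.mem_filter] at hq0
    obtain ⟨hq0S, hq0b, hq0T⟩ := hq0
    have hq0b' : q0.1 < p.1 ∨ (q0.1 = p.1 ∧ p.2 ≤ q0.2) := hq0b
    have hq0T' : TA b h t q0 = (v + 1) + 1 := by omega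
    obtain ⟨c, hcS, hcT, hcr⟩ := key b h t (v+1) (by omega) q0 hq0S hq0T'
    have hLHS : ((skewCells (lamA b h t) (muA b h t)).filter
        (fun q => readsBefore q p ∧ TA b h t q = v + 2)).card ≤ 1 := by
      refine le_trans (Finset.card_le_card ?_) (card_value_le_one b h t (v+2) (by omega))
      intro a ha
      rw [Finset.mem_filter] at ha ⊢
      exact ⟨ha.1, ha.2.2⟩
    have hRHS : 1 ≤ ((skewCells (lamA b h t) (muA b h t)).filter
        (fun q => readsBefore q p ∧ TA b h t q = v + 1)).card := by
      refine Finset.card_pos.mpr ⟨c, Finset.mem_filter.mpr ⟨hcS, ?_, hcT⟩⟩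
      exact Or.inl (by omega)
    omega

end LRAuxE



open PaperNote in
/-- Let `q ≥ 2`, `x ∈ {1,…,q−1}`, `y ∈ {x−1,…,q−2}`, `s = y−(x−1)` even,
`λ = (q−x+1, q−y, 2^{x−1}, 1^s)` and `ν = (q−y+s/2−1, 1^{y−s/2+1})`.  Then the
Littlewood–Richardson coefficient `c^λ_{ν,ν}` is positive. -/
theorem lr_coefficient_nu_positive_even_case
    (q x y : ℕ) (hq : 2 ≤ q) (hx1 : 1 ≤ x) (hxq : x ≤ q - 1)
    (hyx : x - 1 ≤ y) (hyq : y ≤ q - 2) (hs : Even (y - (x - 1))) :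
    ∃ T : ℕ × ℕ → ℕ,
      IsLRTableau
        ([q - x + 1, q - y] ++ List.replicate (x - 1) 2 ++ List.replicate (y - (x - 1)) 1)
        ((q - y + (y - (x - 1)) / 2 - 1) :: List.replicate (y - (y - (x - 1)) / 2 + 1) 1)
        ((q - y + (y - (x - 1)) / 2 - 1) :: List.replicate (y - (y - (x - 1)) / 2 + 1) 1) T := by
  obtain ⟨m, hm⟩ := hs
  obtain ⟨b, hb⟩ : ∃ b, q - y = b + 2 := ⟨q - y - 2, by omega⟩
  obtain ⟨t, ht⟩ : ∃ t, x = t + 1 := ⟨x - 1, by omega⟩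
  refine ⟨LRAuxE.TA b m t, ?_⟩
  have h4 : q - y + (y - (x - 1)) / 2 - 1 = b + m + 1 := by omega
  have h5 : y - (y - (x - 1)) / 2 + 1 = t + m + 1 := by omega
  have h1 : q - x + 1 = b + 2*m + 2 := by omega
  have h3 : y - (x - 1) = 2*m := by omega
  have h2 : q - y = b + 2 := hb
  have h6 : x - 1 = t := by omega
  rw [h4, h5, h1, h3, h2, h6]
  exact LRAuxE.auxLR b m t
end

section
/- Let q ≥ 2, let x ∈ {1,...,q−1}, y ∈ {x−1,...,q−2}, set s = y − (x−1) and suppose s is odd. Let λ = (q−x+1, q−y, 2^{x−1}, 1^{s}) and μ = (q−y+(s−1)/2, 1^{y−(s−1)/2}). Then the Littlewood–Richardson coefficient c^λ_{μ,μ} is positive. -/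
namespace PaperNote

namespace Aux

theorem getD_replicate' (a x d i : ℕ) : (List.replicate a x).getD i d = if i < a then x else d := by
  rcases Nat.lt_or_ge i a with h | h
  · rw [List.getD_eq_getElem?_getD, List.getElem?_replicate, if_pos h]; simp [h]
  · rw [List.getD_eq_getElem?_getD, List.getElem?_replicate, if_neg (Nat.not_lt.mpr h),
      if_neg (Nat.not_lt.mpr h)]; rfl

def lam (a t m : ℕ) : List ℕ :=
  [m + 2*t + 1, m] ++ List.replicate a 2 ++ List.replicate (2*t+1) 1

def mu (a t m : ℕ) : List ℕ := (m + t) :: List.replicate (a + t + 1) 1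

theorem lam_getD (a t m i : ℕ) :
    (lam a t m).getD i 0 = if i = 0 then m + 2*t + 1 else if i = 1 then m
      else if i ≤ a + 1 then 2 else if i ≤ a + 2*t + 2 then 1 else 0 := by
  match i with
  | 0 => rfl
  | 1 => rfl
  | (i+2) =>
    show (List.replicate a 2 ++ List.replicate (2*t+1) 1).getD i 0 = _
    rcases Nat.lt_or_ge i a with h | h
    · rw [List.getD_append _ _ _ _ (by simpa using h), getD_replicate']
      split_ifs <;> first | contradiction | omega
    · rw [List.getD_append_right _ _ _ _ (by simpa using h), getD_replicate']
      simp only [List.length_replicate]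
      split_ifs <;> first | contradiction | omega

theorem mu_getD (a t m i : ℕ) :
    (mu a t m).getD i 0 = if i = 0 then m + t else if i ≤ a + t + 1 then 1 else 0 := by
  match i with
  | 0 => rfl
  | (i+1) =>
    show (List.replicate (a+t+1) 1).getD i 0 = _
    rw [getD_replicate']
    split_ifs <;> first | contradiction | omega

theorem lam_length (a t m : ℕ) : (lam a t m).length = a + 2*t + 3 := by
  simp [lam]; omega

theorem mem_skew (a t m : ℕ) (hm : 2 ≤ m) (i j : ℕ) :
    (i, j) ∈ skewCells (lam a t m) (mu a t m) ↔
      (i = 0 ∧ m + t ≤ j ∧ j ≤ m + 2*t) ∨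
      (i = 1 ∧ 1 ≤ j ∧ j + 1 ≤ m) ∨
      (2 ≤ i ∧ i ≤ a + 1 ∧ j = 1) ∨
      (a + t + 2 ≤ i ∧ i ≤ a + 2*t + 2 ∧ j = 0) := by
  simp only [skewCells, cells, Finset.mem_filter, Finset.mem_product, Finset.mem_range,
    lam_getD, mu_getD, lam_length]
  split_ifs <;> first | contradiction | omega

def Tab (t : ℕ) : ℕ × ℕ → ℕ := fun p => if p.1 ≤ 1 then 1 else if p.2 = 1 then p.1 else p.1 - t

theorem filt (a t m : ℕ) (hm : 2 ≤ m) (w : ℕ) (hw : 2 ≤ w) :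
    (skewCells (lam a t m) (mu a t m)).filter (fun p => Tab t p = w) =
      if w ≤ a + 1 then ({(w, 1)} : Finset (ℕ × ℕ))
      else if w ≤ a + t + 2 then {(w + t, 0)} else ∅ := by
  rcases Nat.lt_or_ge (a+1) w with h1 | h1
  · rcases Nat.lt_or_ge (a+t+2) w with h2 | h2
    · rw [if_neg (by omega), if_neg (by omega)]
      ext ⟨i, j⟩
      rw [Finset.mem_filter]
      simp only [Finset.mem_filter, mem_skew a t m hm, Tab, Finset.notMem_empty, iff_false,
        not_and]
      rintro hc hT
      split_ifs at hT <;> omega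
    · rw [if_neg (by omega), if_pos (by omega)]
      ext ⟨i, j⟩
      rw [Finset.mem_filter]
      simp only [Finset.mem_filter, mem_skew a t m hm, Tab, Finset.mem_singleton, Prod.mk.injEq]
      constructor
      · rintro ⟨hc, hT⟩
        split_ifs at hT <;> omega
      · rintro ⟨rfl, rfl⟩
        refine ⟨by omega, ?_⟩
        rw [if_neg (by omega), if_neg (by omega)]
        omega
  · rw [if_pos (by omega)]
    ext ⟨i, j⟩
    rw [Finset.mem_filter]
    simp only [Finset.mem_filter, mem_skew a t m hm, Tab, Finset.mem_singleton, Prod.mk.injEq]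
    constructor
    · rintro ⟨hc, hT⟩
      split_ifs at hT <;> omega
    · rintro ⟨rfl, rfl⟩
      refine ⟨by omega, ?_⟩
      rw [if_neg (by omega), if_pos rfl]

theorem filt1 (a t m : ℕ) (hm : 2 ≤ m) :
    (skewCells (lam a t m) (mu a t m)).filter (fun p => Tab t p = 1) =
      ((Finset.Icc (m + t) (m + 2*t)).image fun j => ((0 : ℕ), j)) ∪
        ((Finset.Icc 1 (m - 1)).image fun j => ((1 : ℕ), j)) := by
  ext ⟨i, j⟩
  rw [Finset.mem_filter]
  simp only [Finset.mem_filter, mem_skew a t m hm, Tab, Finset.mem_union, Finset.mem_image,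
    Finset.mem_Icc, Prod.mk.injEq]
  constructor
  · rintro ⟨hc, hT⟩
    split_ifs at hT with h1 h2
    · rcases hc with h | h | h | h
      · exact Or.inl ⟨j, by omega, by omega, rfl⟩
      · exact Or.inr ⟨j, by omega, by omega, rfl⟩
      · omega
      · omega
    · omega
    · omega
  · rintro (⟨x, hx, h0, hj⟩ | ⟨x, hx, h0, hj⟩)
    · refine ⟨Or.inl ⟨h0.symm, by omega⟩, ?_⟩
      rw [if_pos (by omega)]
    · refine ⟨Or.inr (Or.inl ⟨h0.symm, by omega⟩), ?_⟩
      rw [if_pos (by omega)]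

theorem card_filt1 (a t m : ℕ) (hm : 2 ≤ m) :
    ((skewCells (lam a t m) (mu a t m)).filter (fun p => Tab t p = 1)).card = m + t := by
  rw [filt1 a t m hm, Finset.card_union_of_disjoint, Finset.card_image_of_injective _
    (fun x y h => by simpa using h), Finset.card_image_of_injective _
    (fun x y h => by simpa using h), Nat.card_Icc, Nat.card_Icc]
  · omega
  · simp only [Finset.disjoint_left, Finset.mem_image, Finset.mem_Icc]
    rintro ⟨i, j⟩ ⟨x, hx, he⟩ ⟨x', hx', he'⟩
    rw [Prod.mk.injEq] at he he'
    omega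

theorem exists_cell (a t m : ℕ) (hm : 2 ≤ m) (w : ℕ) (hw1 : 1 ≤ w) (hw2 : w ≤ a + t + 2) :
    ∃ c : ℕ × ℕ, c ∈ skewCells (lam a t m) (mu a t m) ∧ Tab t c = w ∧
      c.1 = (if w ≤ 1 then 1 else if w ≤ a + 1 then w else w + t) := by
  rcases Nat.lt_or_ge w 2 with h | h
  · refine ⟨(1, 1), (mem_skew a t m hm 1 1).mpr (by omega), ?_, ?_⟩
    · show (if (1:ℕ) ≤ 1 then 1 else _) = w
      rw [if_pos le_rfl]; omega
    · rw [if_pos (by omega : w ≤ 1)]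
  · rcases le_or_gt w (a+1) with h2 | h2
    · refine ⟨(w, 1), (mem_skew a t m hm w 1).mpr (by omega), ?_, ?_⟩
      · show (if w ≤ 1 then 1 else if (1:ℕ) = 1 then w else w - t) = w
        rw [if_neg (by omega), if_pos rfl]
      · rw [if_neg (by omega), if_pos h2]
    · refine ⟨(w + t, 0), (mem_skew a t m hm (w+t) 0).mpr (by omega), ?_, ?_⟩
      · show (if w + t ≤ 1 then 1 else if (0:ℕ) = 1 then w + t else w + t - t) = w
        rw [if_neg (by omega), if_neg (by omega)]
        omega
      · rw [if_neg (by omega), if_neg (by omega)]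

theorem aux_main (a t m : ℕ) (hm : 2 ≤ m) :
    IsLRTableau (lam a t m) (mu a t m) (mu a t m) (Tab t) := by
  refine ⟨?_, ?_, ?_, ?_, ?_⟩
  · rintro ⟨i, j⟩ hp
    rw [mem_skew a t m hm] at hp
    simp only [Tab]
    split_ifs <;> omega
  · intro i j j' h h' hle
    rw [mem_skew a t m hm] at h h'
    simp only [Tab]
    split_ifs <;> omega
  · intro i i' j h h' hlt
    rw [mem_skew a t m hm] at h h'
    simp only [Tab]
    split_ifs <;> omega
  · intro v
    rw [mu_getD]
    rcases v with _ | v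
    · rw [if_pos rfl]
      exact card_filt1 a t m hm
    · rw [filt a t m hm (v + 1 + 1) (by omega)]
      split_ifs <;> first | contradiction | omega | simp
  · intro p hp v
    set S := skewCells (lam a t m) (mu a t m) with hS
    rcases Finset.eq_empty_or_nonempty
        (S.filter (fun q => readsBefore q p ∧ Tab t q = v + 2)) with he | ⟨q, hq⟩
    · rw [he]; simp
    · rw [Finset.mem_filter] at hq
      obtain ⟨hqS, hqb, hqT⟩ := hq
      have hqb' : q.1 < p.1 ∨ (q.1 = p.1 ∧ p.2 ≤ q.2) := hqb
      have hqle : q.1 ≤ p.1 := by omega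
      have hq2 : q ∈ S.filter (fun r => Tab t r = v + 2) :=
        Finset.mem_filter.mpr ⟨hqS, hqT⟩
      rw [filt a t m hm (v + 2) (by omega)] at hq2
      have key : v + 2 ≤ a + t + 2 ∧ ((q.1 = v + 2 ∧ v + 2 ≤ a + 1) ∨ q.1 = v + 2 + t) := by
        split_ifs at hq2 with h1 h2
        · rw [Finset.mem_singleton] at hq2
          exact ⟨by omega, Or.inl ⟨by rw [hq2], h1⟩⟩
        · rw [Finset.mem_singleton] at hq2
          exact ⟨by omega, Or.inr (by rw [hq2])⟩
        · exact absurd hq2 (Finset.notMem_empty _)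
      obtain ⟨hv2, hqrow⟩ := key
      obtain ⟨c, hcS, hcT, hc1⟩ := exists_cell a t m hm (v + 1) (by omega) (by omega)
      have hcplt : c.1 < p.1 := by rcases hqrow with h | h <;> split_ifs at hc1 <;> omega
      have hrb : readsBefore c p := Or.inl hcplt
      have hge1 : 1 ≤ (S.filter (fun q => readsBefore q p ∧ Tab t q = v + 1)).card :=
        Finset.card_pos.mpr ⟨c, Finset.mem_filter.mpr ⟨hcS, hrb, hcT⟩⟩
      have hsub : S.filter (fun q => readsBefore q p ∧ Tab t q = v + 2) ⊆
          S.filter (fun r => Tab t r = v + 2) := by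
        intro x hx
        rw [Finset.mem_filter] at hx ⊢
        exact ⟨hx.1, hx.2.2⟩
      have hle1 : (S.filter (fun q => readsBefore q p ∧ Tab t q = v + 2)).card ≤ 1 := by
        refine le_trans (Finset.card_le_card hsub) ?_
        rw [filt a t m hm (v + 2) (by omega)]
        split_ifs <;> simp
      exact le_trans hle1 hge1

end Aux

end PaperNote

open PaperNote in
/-- Let `q ≥ 2`, `x ∈ {1,…,q−1}`, `y ∈ {x−1,…,q−2}`, `s = y−(x−1)` odd,
`λ = (q−x+1, q−y, 2^{x−1}, 1^s)` and `μ = (q−y+(s−1)/2, 1^{y−(s−1)/2})`.  Then the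
Littlewood–Richardson coefficient `c^λ_{μ,μ}` is positive. -/
theorem lr_coefficient_mu_positive_odd_case
    (q x y : ℕ) (hq : 2 ≤ q) (hx1 : 1 ≤ x) (hxq : x ≤ q - 1)
    (hyx : x - 1 ≤ y) (hyq : y ≤ q - 2) (hs : Odd (y - (x - 1))) :
    ∃ T : ℕ × ℕ → ℕ,
      IsLRTableau
        ([q - x + 1, q - y] ++ List.replicate (x - 1) 2 ++ List.replicate (y - (x - 1)) 1)
        ((q - y + (y - (x - 1) - 1) / 2) :: List.replicate (y - (y - (x - 1) - 1) / 2) 1)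
        ((q - y + (y - (x - 1) - 1) / 2) :: List.replicate (y - (y - (x - 1) - 1) / 2) 1) T := by
  obtain ⟨t, ht⟩ := hs
  have hm2 : 2 ≤ q - y := by omega
  have e1 : q - x + 1 = (q - y) + 2*t + 1 := by omega
  have e3 : y - (x - 1) = 2*t + 1 := by omega
  have e4 : (y - (x - 1) - 1) / 2 = t := by omega
  rw [e4]
  have e5 : y - t = (x - 1) + t + 1 := by omega
  rw [e1, e3, e5]
  exact ⟨Aux.Tab t, Aux.aux_main (x - 1) t (q - y) hm2⟩
end

section
/- Let λ be a partition of 2n and let Δ²(λ) be the partition of n defined from the odd and even parts of λ. Then the irreducible character χ^{Δ²(λ)} × χ^{Δ²(λ)} of S_n × S_n is a constituent of the restriction of χ^λ from S_{2n} to S_n × S_n; equivalently, the Littlewood–Richardson coefficient c^λ_{Δ²(λ), Δ²(λ)} is positive. -/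
namespace PaperNote

section LRAux
open List

variable (lam : List ℕ)

def Lf (i : ℕ) : ℕ := lam.getD i 0

def op (i : ℕ) : Prop := Lf lam i % 2 = 1

instance opDec : DecidablePred (op lam) := fun i => instDecidableEqNat (Lf lam i % 2) 1

def rk (i : ℕ) : ℕ := Nat.count (op lam) i

def tt : ℕ := rk lam lam.length

def zz : ℕ := tt lam / 2

def NegR (i : ℕ) : Prop := op lam i ∧ rk lam i < zz lam
def PosR (i : ℕ) : Prop := op lam i ∧ zz lam ≤ rk lam i

instance negDec : DecidablePred (NegR lam) := fun i => by unfold NegR; infer_instance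
instance posDec : DecidablePred (PosR lam) := fun i => by unfold PosR; infer_instance

def mm (i : ℕ) : ℕ :=
  if NegR lam i then Lf lam i / 2 + 1 else Lf lam i / 2

noncomputable def Jf (j : ℕ) : ℕ := Nat.nth (op lam) j

noncomputable def avf (i : ℕ) : ℕ := Jf lam (rk lam i - zz lam)
noncomputable def Bmf (u : ℕ) : ℕ := Jf lam (zz lam + rk lam u)
def specf (i : ℕ) : ℕ := if PosR lam i then 1 else 0
noncomputable def Tabf (q : ℕ × ℕ) : ℕ :=
  if PosR lam q.1 ∧ q.2 = mm lam q.1 then avf lam q.1 + 1 else q.1 + 1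
def Ccf (w : ℕ) : ℕ := mm lam w - (if NegR lam w then 1 else 0)

variable {lam}

/-! ### Basic facts about `Lf` -/

lemma Lf_zero {i : ℕ} (h : lam.length ≤ i) : Lf lam i = 0 := by
  unfold Lf; exact List.getD_eq_default _ _ h

lemma lt_length_of_Lf_pos {i : ℕ} (h : 0 < Lf lam i) : i < lam.length := by
  by_contra hc
  rw [Lf_zero (Nat.le_of_not_lt hc)] at h
  exact Nat.lt_irrefl 0 h

lemma Lf_pos (hpos : ∀ a ∈ lam, 0 < a) {i : ℕ} (h : i < lam.length) : 0 < Lf lam i := by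
  unfold Lf
  rw [List.getD_eq_getElem _ _ h]
  exact hpos _ (lam.getElem_mem h)

lemma Lf_anti (hs : lam.Pairwise (· ≥ ·)) : Antitone (Lf lam) := by
  intro i j hij
  rcases Nat.lt_or_ge j lam.length with hj | hj
  · have hi : i < lam.length := lt_of_le_of_lt hij hj
    rcases Nat.eq_or_lt_of_le hij with rfl | hlt
    · exact le_refl _
    · unfold Lf
      rw [List.getD_eq_getElem _ _ hj, List.getD_eq_getElem _ _ hi]
      exact (List.pairwise_iff_getElem.1 hs) i j hi hj hlt
  · rw [Lf_zero hj]; exact Nat.zero_le _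

lemma op_lt_length {i : ℕ} (h : op lam i) : i < lam.length := by
  apply lt_length_of_Lf_pos
  unfold op at h
  omega

/-! ### rank facts -/

lemma rk_succ_op {i : ℕ} (h : op lam i) : rk lam (i + 1) = rk lam i + 1 := by
  unfold rk; rw [Nat.count_succ, if_pos h]

lemma rk_mono : Monotone (rk lam) := Nat.count_monotone _

lemma rk_lt_tt {i : ℕ} (h : op lam i) : rk lam i < tt lam := by
  have h1 : rk lam (i + 1) ≤ tt lam := rk_mono (Nat.succ_le_of_lt (op_lt_length h))
  rw [rk_succ_op h] at h1
  omega

lemma rk_strict {i i' : ℕ} (h : op lam i) (hlt : i < i') : rk lam i < rk lam i' := by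
  have h1 : rk lam (i + 1) ≤ rk lam i' := rk_mono hlt
  rw [rk_succ_op h] at h1
  omega

/-! ### finiteness and Jf facts -/

lemma op_finite : (Set.ofPred (op lam)).Finite := by
  apply Set.Finite.subset (Set.finite_Iio lam.length)
  intro i hi
  exact op_lt_length hi

lemma op_card (hf : (Set.ofPred (op lam)).Finite) : hf.toFinset.card = tt lam := by
  have : hf.toFinset = (Finset.range lam.length).filter (op lam) := by
    ext i
    simp only [Set.Finite.mem_toFinset, Set.mem_setOf_eq, Finset.mem_filter, Finset.mem_range]
    exact ⟨fun h => ⟨op_lt_length h, h⟩, fun h => h.2⟩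
  rw [this]
  exact (Nat.count_eq_card_filter_range _ _).symm

lemma Jf_op {j : ℕ} (h : j < tt lam) : op lam (Jf lam j) :=
  Nat.nth_mem_of_lt_card op_finite (by rw [op_card]; exact h)

lemma rk_Jf {j : ℕ} (h : j < tt lam) : rk lam (Jf lam j) = j :=
  Nat.count_nth (fun hf => by rw [op_card hf]; exact h)

lemma Jf_rk {i : ℕ} (h : op lam i) : Jf lam (rk lam i) = i := Nat.nth_count h

lemma Jf_mono {j j' : ℕ} (h : j < j') (h' : j' < tt lam) : Jf lam j < Jf lam j' :=
  Nat.nth_lt_nth_of_lt_card op_finite h (by rw [op_card]; exact h')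

/-! ### parity relations between Lf and mm -/

lemma not_neg_pos {i : ℕ} (h : NegR lam i) (h' : PosR lam i) : False := by
  rcases h with ⟨-, h2⟩; rcases h' with ⟨-, h3⟩; omega

lemma Lf_of_neg {i : ℕ} (h : NegR lam i) : Lf lam i + 1 = 2 * mm lam i := by
  unfold mm
  rw [if_pos h]
  have h2 := h.1
  unfold op at h2
  omega

lemma Lf_of_pos {i : ℕ} (h : PosR lam i) : Lf lam i = 2 * mm lam i + 1 := by
  unfold mm
  rw [if_neg (fun h' => not_neg_pos h' h)]
  have h2 := h.1
  unfold op at h2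
  omega

lemma Lf_of_even {i : ℕ} (h : ¬ op lam i) : Lf lam i = 2 * mm lam i := by
  unfold mm
  rw [if_neg (fun h' => h h'.1)]
  unfold op at h
  omega

lemma mm_pos_of_neg {i : ℕ} (h : NegR lam i) : 1 ≤ mm lam i := by
  unfold mm; rw [if_pos h]; omega

lemma mm_zero {i : ℕ} (h : lam.length ≤ i) : mm lam i = 0 := by
  unfold mm
  rw [if_neg, Lf_zero h]
  rintro ⟨h1, -⟩
  exact absurd (op_lt_length h1) (Nat.not_lt.2 h)

lemma NegR_or : ∀ i, NegR lam i ∨ PosR lam i ∨ ¬ op lam i := by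
  intro i
  by_cases h : op lam i
  · rcases Nat.lt_or_ge (rk lam i) (zz lam) with h2 | h2
    · exact Or.inl ⟨h, h2⟩
    · exact Or.inr (Or.inl ⟨h, h2⟩)
  · exact Or.inr (Or.inr h)

/-! ### antitonicity of mm -/

lemma mm_anti (hs : lam.Pairwise (· ≥ ·)) : Antitone (mm lam) := by
  apply antitone_nat_of_succ_le
  intro i
  have hL : Lf lam (i + 1) ≤ Lf lam i := Lf_anti hs (Nat.le_succ i)
  rcases NegR_or (lam := lam) (i+1) with h1 | h1
  · -- i+1 is Neg; show i is Neg or Lf gap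
    by_cases h2 : op lam i
    · have hneg : NegR lam i := by
        refine ⟨h2, ?_⟩
        have := rk_succ_op h2
        have h3 := h1.2
        omega
      have e1 := Lf_of_neg h1
      have e2 := Lf_of_neg hneg
      omega
    · have e1 := Lf_of_neg h1
      have e2 := Lf_of_even h2
      have h3 := h1.1
      unfold op at h3
      -- Lf i even, Lf (i+1) odd, Lf (i+1) ≤ Lf i so Lf(i+1)+1 ≤ Lf i
      omega
  · have hm : mm lam (i+1) = Lf lam (i+1) / 2 := by
      unfold mm
      rw [if_neg]
      rcases h1 with h1 | h1
      · rintro ⟨-, h3⟩; exact absurd h3 (Nat.not_lt.2 h1.2)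
      · rintro ⟨h3, -⟩; exact h1 h3
    have hm2 : Lf lam i / 2 ≤ mm lam i := by
      unfold mm; split <;> omega
    rw [hm]
    exact le_trans (Nat.div_le_div_right hL) hm2

/-! ### Cc facts -/

lemma Cc_eq {w : ℕ} : Lf lam w - (mm lam w + specf lam w) = Ccf lam w := by
  unfold Ccf specf
  rcases NegR_or (lam := lam) w with h | h | h
  · rw [if_pos h, if_neg (fun h' => not_neg_pos h h')]
    have := Lf_of_neg h
    omega
  · rw [if_neg (fun h' => not_neg_pos h' h), if_pos h]
    have := Lf_of_pos h
    omega
  · have hn : ¬ NegR lam w := fun h' => h h'.1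
    have hp : ¬ PosR lam w := fun h' => h h'.1
    rw [if_neg hn, if_neg hp]
    have := Lf_of_even h
    omega

lemma mm_spec_le_Lf {w : ℕ} : mm lam w + specf lam w ≤ Lf lam w := by
  unfold specf
  rcases NegR_or (lam := lam) w with h | h | h
  · rw [if_neg (fun h' => not_neg_pos h h')]
    have := Lf_of_neg h
    have := mm_pos_of_neg h
    omega
  · rw [if_pos h]
    have := Lf_of_pos h
    omega
  · have hp : ¬ PosR lam w := fun h' => h h'.1
    rw [if_neg hp]
    have := Lf_of_even h
    omega

lemma Cc_mono (hs : lam.Pairwise (· ≥ ·)) {v : ℕ} : Ccf lam (v + 1) ≤ Ccf lam v := by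
  unfold Ccf
  have hmm : mm lam (v+1) ≤ mm lam v := mm_anti hs (Nat.le_succ v)
  by_cases h1 : NegR lam (v+1)
  · rw [if_pos h1]
    split
    · omega
    · omega
  · rw [if_neg h1]
    by_cases h2 : NegR lam v
    · rw [if_pos h2]
      -- need mm (v+1) ≤ mm v - 1; suppose equal, derive contradiction with sortedness
      rcases Nat.lt_or_ge (mm lam (v+1)) (mm lam v) with h3 | h3
      · omega
      · exfalso
        have he : mm lam (v+1) = mm lam v := le_antisymm hmm h3
        have e2 := Lf_of_neg h2
        have hL : Lf lam (v + 1) ≤ Lf lam v := Lf_anti hs (Nat.le_succ v)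
        rcases NegR_or (lam := lam) (v+1) with h4 | h4 | h4
        · exact h1 h4
        · have := Lf_of_pos h4; omega
        · have := Lf_of_even h4
          have hm1 : 1 ≤ mm lam v := mm_pos_of_neg h2
          omega
    · rw [if_neg h2]; omega
/-! ### matching lemmas; assume `htt : tt lam = 2 * zz lam` -/

section Matching
variable (htt : tt lam = 2 * zz lam)
include htt

lemma Bmf_lt_tt {u : ℕ} (h : NegR lam u) : zz lam + rk lam u < tt lam := by
  have := h.2; omega

lemma Bmf_op {u : ℕ} (h : NegR lam u) : op lam (Bmf lam u) :=
  Jf_op (Bmf_lt_tt htt h)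

lemma rk_Bmf {u : ℕ} (h : NegR lam u) : rk lam (Bmf lam u) = zz lam + rk lam u :=
  rk_Jf (Bmf_lt_tt htt h)

lemma Bmf_posR {u : ℕ} (h : NegR lam u) : PosR lam (Bmf lam u) :=
  ⟨Bmf_op htt h, by rw [rk_Bmf htt h]; omega⟩

lemma lt_Bmf {u : ℕ} (h : NegR lam u) : u < Bmf lam u := by
  have h1 : u = Jf lam (rk lam u) := (Jf_rk h.1).symm
  have h2 : rk lam u < zz lam + rk lam u := by have := h.2; omega
  calc u = Jf lam (rk lam u) := h1
    _ < Jf lam (zz lam + rk lam u) := Jf_mono h2 (Bmf_lt_tt htt h)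

lemma avf_Bmf {u : ℕ} (h : NegR lam u) : avf lam (Bmf lam u) = u := by
  unfold avf
  rw [rk_Bmf htt h, Nat.add_sub_cancel_left]
  exact Jf_rk h.1

lemma Bmf_lt_length {u : ℕ} (h : NegR lam u) : Bmf lam u < lam.length :=
  op_lt_length (Bmf_op htt h)

lemma rk_sub_lt {i : ℕ} (h : PosR lam i) : rk lam i - zz lam < zz lam := by
  have := rk_lt_tt h.1
  have := h.2
  omega

lemma zz_pos_of_posR {i : ℕ} (h : PosR lam i) : 1 ≤ zz lam := by
  have := rk_sub_lt htt h; omega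

lemma avf_negR {i : ℕ} (h : PosR lam i) : NegR lam (avf lam i) := by
  have h1 : rk lam i - zz lam < tt lam := by have := rk_sub_lt htt h; omega
  exact ⟨Jf_op h1, by unfold avf; rw [rk_Jf h1]; exact rk_sub_lt htt h⟩

lemma avf_lt {i : ℕ} (h : PosR lam i) : avf lam i < i := by
  have h1 : rk lam i - zz lam < rk lam i := by
    have := zz_pos_of_posR htt h
    have := h.2
    omega
  calc avf lam i = Jf lam (rk lam i - zz lam) := rfl
    _ < Jf lam (rk lam i) := Jf_mono h1 (rk_lt_tt h.1)
    _ = i := Jf_rk h.1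

lemma Bmf_avf {i : ℕ} (h : PosR lam i) : Bmf lam (avf lam i) = i := by
  unfold Bmf
  have hneg := avf_negR htt h
  unfold avf
  rw [rk_Jf (by have := rk_sub_lt htt h; omega : rk lam i - zz lam < tt lam)]
  rw [Nat.add_sub_cancel' h.2]
  exact Jf_rk h.1

lemma Bmf_mono_adj {v : ℕ} (h : NegR lam v) (h' : NegR lam (v+1)) :
    Bmf lam v < Bmf lam (v+1) := by
  unfold Bmf
  have h1 : rk lam (v+1) = rk lam v + 1 := rk_succ_op h.1
  rw [h1]
  exact Jf_mono (by omega) (by have := h'.2; rw [h1] at *; omega)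

lemma avf_strict {i i' : ℕ} (h : PosR lam i) (h' : PosR lam i') (hlt : i < i') :
    avf lam i < avf lam i' := by
  unfold avf
  have h1 : rk lam i < rk lam i' := rk_strict h.1 hlt
  exact Jf_mono (by have := h.2; omega) (by have := rk_lt_tt h'.1; have := h'.2; omega)

end Matching
/-! ### the bridge: `(deltaSq lam).getD j 0 = mm lam j` -/

variable (lam)

def po (i : ℕ) : Bool := decide (Lf lam i % 2 = 1)

def Il : List ℕ := (List.range lam.length).filter (po lam)
def El : List ℕ := (List.range lam.length).filter (fun i => !po lam i)

variable {lam}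

lemma po_iff {i : ℕ} : po lam i = true ↔ op lam i := by
  unfold po op; simp

lemma lam_eq_map : (List.range lam.length).map (Lf lam) = lam := by
  show (List.range lam.length).map (fun i => lam.getD i 0) = lam
  induction lam with
  | nil => rfl
  | cons a l ih =>
    show (List.range (l.length + 1)).map _ = _
    rw [List.range_succ_eq_map, List.map_cons, List.map_map]
    simp only [List.getD_cons_zero, List.cons.injEq, true_and]
    rw [show ((fun i => (a :: l).getD i 0) ∘ Nat.succ) = fun i => l.getD i 0 from rfl]
    exact ih

lemma count_eq_length (N : ℕ) :
    Nat.count (op lam) N = ((List.range N).filter (po lam)).length := by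
  rw [Nat.count, List.countP_eq_length_filter]
  rfl

lemma mem_Il {i : ℕ} : i ∈ Il lam ↔ i < lam.length ∧ op lam i := by
  unfold Il
  rw [List.mem_filter, List.mem_range, po_iff]

lemma mem_El {i : ℕ} : i ∈ El lam ↔ i < lam.length ∧ ¬ op lam i := by
  unfold El
  rw [List.mem_filter, List.mem_range]
  simp only [Bool.not_eq_true', ← po_iff]
  simp

lemma filter_lam (q : ℕ → Bool) :
    lam.filter q = ((List.range lam.length).filter (fun i => q (Lf lam i))).map (Lf lam) := by
  have h1 : ((List.range lam.length).map (Lf lam)).filter q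
      = ((List.range lam.length).filter (fun i => q (Lf lam i))).map (Lf lam) := by
    rw [List.filter_map]
    rfl
  rw [← h1, lam_eq_map]

lemma ks_eq : (lam.filter (fun a => decide (a % 2 = 1))).map (fun a => a / 2)
    = (Il lam).map (fun i => Lf lam i / 2) := by
  rw [filter_lam (fun a => decide (a % 2 = 1)), List.map_map]
  rfl

lemma rs_eq : (lam.filter (fun a => decide (a % 2 = 0))).map (fun a => a / 2)
    = (El lam).map (fun i => Lf lam i / 2) := by
  rw [filter_lam (fun a => decide (a % 2 = 0)), List.map_map]
  have : (fun i => decide (Lf lam i % 2 = 0)) = fun i => !po lam i := by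
    funext i
    show _ = !decide (Lf lam i % 2 = 1)
    rw [← decide_not]
    apply decide_eq_decide.mpr
    omega
  rw [this]
  rfl

lemma Il_len : (Il lam).length = tt lam := (count_eq_length _).symm

lemma mm_eq_of_neg {i : ℕ} (h : NegR lam i) : mm lam i = Lf lam i / 2 + 1 := by
  unfold mm; rw [if_pos h]

lemma mm_eq_of_notneg {i : ℕ} (h : ¬ NegR lam i) : mm lam i = Lf lam i / 2 := by
  unfold mm; rw [if_neg h]

lemma map_mm_Il (htt : tt lam = 2 * zz lam) :
    (Il lam).map (mm lam) =
      ((Il lam).take (zz lam)).map (fun i => Lf lam i / 2 + 1) ++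
      ((Il lam).drop (zz lam)).map (fun i => Lf lam i / 2) := by
  by_cases hz : zz lam = 0
  · have h0 : tt lam = 0 := by omega
    have : Il lam = [] := List.eq_nil_of_length_eq_zero (by rw [Il_len]; exact h0)
    simp [this]
  · have hzt : zz lam < tt lam := by omega
    set M := Jf lam (zz lam) with hM
    have hopM : op lam M := Jf_op hzt
    have hML : M < lam.length := op_lt_length hopM
    have hcM : rk lam M = zz lam := rk_Jf hzt
    have hdec : List.range lam.length =
        List.range M ++ (List.range (lam.length - M)).map (fun x => M + x) := by
      rw [← List.range_add, Nat.add_sub_cancel' (Nat.le_of_lt hML)]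
    have hIl : Il lam = (List.range M).filter (po lam) ++
        ((List.range (lam.length - M)).map (fun x => M + x)).filter (po lam) := by
      unfold Il; rw [hdec, List.filter_append]
    have hlen1 : ((List.range M).filter (po lam)).length = zz lam := by
      rw [← count_eq_length]; exact hcM
    have htake : (Il lam).take (zz lam) = (List.range M).filter (po lam) := by
      rw [hIl]; exact List.take_left' hlen1
    have hdrop : (Il lam).drop (zz lam) =
        ((List.range (lam.length - M)).map (fun x => M + x)).filter (po lam) := by
      rw [hIl]; exact List.drop_left' hlen1
    have hmm1 : ∀ i ∈ (Il lam).take (zz lam), mm lam i = Lf lam i / 2 + 1 := by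
      intro i hi
      rw [htake] at hi
      rw [List.mem_filter, List.mem_range] at hi
      obtain ⟨hiM, hpo⟩ := hi
      have hop : op lam i := po_iff.mp hpo
      apply mm_eq_of_neg
      refine ⟨hop, ?_⟩
      by_contra hc
      push_neg at hc
      rcases Nat.eq_or_lt_of_le hc with heq | hlt
      · have : Jf lam (zz lam) = i := by rw [heq]; exact Jf_rk hop
        omega
      · have : Jf lam (zz lam) < Jf lam (rk lam i) := Jf_mono hlt (rk_lt_tt hop)
        rw [Jf_rk hop] at this
        omega
    have hmm2 : ∀ i ∈ (Il lam).drop (zz lam), mm lam i = Lf lam i / 2 := by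
      intro i hi
      rw [hdrop] at hi
      rw [List.mem_filter, List.mem_map] at hi
      obtain ⟨⟨x, hx, rfl⟩, hpo⟩ := hi
      have hop : op lam (M + x) := po_iff.mp hpo
      apply mm_eq_of_notneg
      rintro ⟨-, hrk⟩
      have : rk lam M ≤ rk lam (M + x) := rk_mono (Nat.le_add_right _ _)
      omega
    conv_lhs => rw [← List.take_append_drop (zz lam) (Il lam)]
    rw [List.map_append, List.map_congr_left hmm1, List.map_congr_left hmm2]

lemma map_mm_El : (El lam).map (mm lam) = (El lam).map (fun i => Lf lam i / 2) := by
  apply List.map_congr_left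
  intro i hi
  exact mm_eq_of_notneg (fun h' => (mem_El.mp hi).2 h'.1)

lemma map_mm_sorted (hs : lam.Pairwise (· ≥ ·)) :
    ((List.range lam.length).map (mm lam)).Pairwise (· ≥ ·) := by
  rw [List.pairwise_iff_getElem]
  intro i j hi hj hij
  simp only [List.getElem_map, List.getElem_range]
  exact mm_anti hs (le_of_lt (by simpa using hij))

lemma deltaSq_eq_filter (hs : lam.Pairwise (· ≥ ·)) (htt : tt lam = 2 * zz lam) :
    deltaSq lam = ((List.range lam.length).map (mm lam)).filter (fun a => decide (0 < a)) := by
  unfold deltaSq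
  dsimp only
  have hklen : ((lam.filter (fun a => decide (a % 2 = 1))).map (fun a => a / 2)).length / 2
      = zz lam := by
    rw [ks_eq, List.length_map, Il_len]
    rfl
  rw [hklen, ks_eq, rs_eq]
  have hX : ((((Il lam).map (fun i => Lf lam i / 2)).take (zz lam)).map (fun a => a + 1) ++
        ((Il lam).map (fun i => Lf lam i / 2)).drop (zz lam) ++
        (El lam).map (fun i => Lf lam i / 2))
      = (Il lam).map (mm lam) ++ (El lam).map (mm lam) := by
    rw [← List.map_take, List.map_map, ← List.map_drop, map_mm_Il htt, map_mm_El]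
    have hcomp : ((fun a => a + 1) ∘ fun i => Lf lam i / 2) = (fun i => Lf lam i / 2 + 1) := rfl
    rw [hcomp, List.append_assoc]
  rw [hX]
  congr 1
  refine (fun h1 h2 h3 => List.Perm.eq_of_pairwise' (r := (· ≥ ·)) h2 h3 h1) ?_ ?_ ?_
  · calc List.insertionSort (· ≥ ·) ((Il lam).map (mm lam) ++ (El lam).map (mm lam))
        ~ (Il lam).map (mm lam) ++ (El lam).map (mm lam) := List.perm_insertionSort _ _
      _ = (Il lam ++ El lam).map (mm lam) := List.map_append.symm
      _ ~ (List.range lam.length).map (mm lam) :=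
          (List.filter_append_perm (po lam) (List.range lam.length)).map (mm lam)
  · exact List.pairwise_insertionSort _ _
  · exact map_mm_sorted hs

lemma mm_le_Lf {i : ℕ} : mm lam i ≤ Lf lam i := by
  rcases NegR_or (lam := lam) i with h | h | h
  · have := Lf_of_neg h; have := mm_pos_of_neg h; omega
  · have := Lf_of_pos h; omega
  · have := Lf_of_even h; omega

lemma deltaSq_getD (hs : lam.Pairwise (· ≥ ·)) (htt : tt lam = 2 * zz lam) (j : ℕ) :
    (deltaSq lam).getD j 0 = mm lam j := by
  rw [deltaSq_eq_filter hs htt]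
  rcases Nat.eq_zero_or_pos (mm lam j) with h0 | hpos
  · rw [h0]
    apply List.getD_eq_default
    rw [← List.countP_eq_length_filter, List.countP_map]
    have hc : List.countP ((fun a => decide (0 < a)) ∘ mm lam) (List.range lam.length)
        = Nat.count (fun i => 0 < mm lam i) lam.length := by
      rw [Nat.count]
      rfl
    rw [hc, Nat.count_eq_card_filter_range]
    calc ((Finset.range lam.length).filter (fun i => 0 < mm lam i)).card
        ≤ (Finset.range j).card := by
          apply Finset.card_le_card
          intro i hi
          rw [Finset.mem_filter] at hi
          rw [Finset.mem_range]
          by_contra hc2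
          push_neg at hc2
          have : mm lam i ≤ mm lam j := mm_anti hs hc2
          omega
      _ = j := Finset.card_range j
  · have hjL : j < lam.length := lt_length_of_Lf_pos (lt_of_lt_of_le hpos mm_le_Lf)
    have hdec : List.range lam.length =
        List.range (j+1) ++ (List.range (lam.length - (j+1))).map (fun x => (j+1) + x) := by
      rw [← List.range_add, Nat.add_sub_cancel' hjL]
    rw [hdec, List.map_append, List.filter_append]
    have hself : ((List.range (j+1)).map (mm lam)).filter (fun a => decide (0 < a))
        = (List.range (j+1)).map (mm lam) := by
      apply List.filter_eq_self.mpr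
      intro a ha
      rw [List.mem_map] at ha
      obtain ⟨i, hi, rfl⟩ := ha
      rw [List.mem_range] at hi
      have : mm lam j ≤ mm lam i := mm_anti hs (by omega)
      simp only [decide_eq_true_eq]
      omega
    rw [hself]
    have hlen : ((List.range (j+1)).map (mm lam)).length = j + 1 := by simp
    have hj1 : j < ((List.range (j+1)).map (mm lam)).length := by omega
    rw [List.getD_eq_getElem _ _ (by rw [List.length_append]; omega)]
    rw [List.getElem_append_left hj1]
    simp
/-! ### parity of the number of odd parts -/

lemma sum_mod_two : ∀ N : ℕ, (((List.range N).map (Lf lam)).sum) % 2 = Nat.count (op lam) N % 2 := by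
  intro N
  induction N with
  | zero => rfl
  | succ N ih =>
    rw [List.range_succ, List.map_append, List.sum_append, Nat.count_succ]
    by_cases h : op lam N
    · rw [if_pos h]
      have h2 : Lf lam N % 2 = 1 := h
      simp only [List.map_cons, List.map_nil, List.sum_cons, List.sum_nil]
      omega
    · rw [if_neg h]
      have h2 : Lf lam N % 2 = 0 := by
        have := Nat.mod_two_eq_zero_or_one (Lf lam N)
        unfold op at h
        omega
      simp only [List.map_cons, List.map_nil, List.sum_cons, List.sum_nil]
      omega

lemma tt_even {n : ℕ} (hsum : lam.sum = 2 * n) : tt lam = 2 * zz lam := by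
  have h1 := sum_mod_two (lam := lam) lam.length
  rw [lam_eq_map] at h1
  have h2 : tt lam = Nat.count (op lam) lam.length := rfl
  unfold zz
  omega

/-! ### skew cell membership -/

lemma mem_skew_s11 (hs : lam.Pairwise (· ≥ ·)) (htt : tt lam = 2 * zz lam) {q : ℕ × ℕ} :
    q ∈ skewCells lam (deltaSq lam) ↔ mm lam q.1 ≤ q.2 ∧ q.2 < Lf lam q.1 := by
  unfold skewCells cells
  rw [Finset.mem_filter, Finset.mem_filter, Finset.mem_product, Finset.mem_range,
    Finset.mem_range, deltaSq_getD hs htt]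
  constructor
  · rintro ⟨⟨⟨-, -⟩, h2⟩, h3⟩
    exact ⟨h3, h2⟩
  · rintro ⟨h1, h2⟩
    have hq1 : q.1 < lam.length := lt_length_of_Lf_pos (by omega)
    have hq0 : q.2 < Lf lam 0 := lt_of_lt_of_le h2 (Lf_anti hs (Nat.zero_le _))
    exact ⟨⟨⟨hq1, hq0⟩, h2⟩, h1⟩

/-! ### the key counting lemma -/

lemma card_row (hs : lam.Pairwise (· ≥ ·)) (htt : tt lam = 2 * zz lam) (lo : ℕ → ℕ) (w : ℕ) :
    ((skewCells lam (deltaSq lam)).filter (fun q => lo q.1 ≤ q.2 ∧ Tabf lam q = w + 1)).card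
    = (Lf lam w - max (lo w) (mm lam w + specf lam w))
      + (if NegR lam w ∧ lo (Bmf lam w) ≤ mm lam (Bmf lam w) then 1 else 0) := by
  set S1 : Finset (ℕ × ℕ) :=
    {w} ×ˢ Finset.Ico (max (lo w) (mm lam w + specf lam w)) (Lf lam w) with hS1
  have hcard1 : S1.card = Lf lam w - max (lo w) (mm lam w + specf lam w) := by
    rw [hS1, Finset.card_product, Finset.card_singleton, Nat.card_Ico, one_mul]
  have hmemS1 : ∀ q : ℕ × ℕ, q ∈ S1 ↔
      (q.1 = w ∧ max (lo w) (mm lam w + specf lam w) ≤ q.2 ∧ q.2 < Lf lam w) := by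
    intro q
    rw [hS1, Finset.mem_product, Finset.mem_singleton, Finset.mem_Ico]
  have hS1mem : ∀ q : ℕ × ℕ, q ∈ S1 →
      q ∈ (skewCells lam (deltaSq lam)).filter (fun q => lo q.1 ≤ q.2 ∧ Tabf lam q = w + 1) := by
    intro q hq
    rw [hmemS1] at hq
    obtain ⟨hq1, hq2, hq3⟩ := hq
    have hspec : ¬ (PosR lam q.1 ∧ q.2 = mm lam q.1) := by
      rintro ⟨hpos, heq⟩
      rw [hq1] at hpos heq
      unfold specf at hq2
      rw [if_pos hpos] at hq2
      have := le_max_right (lo w) (mm lam w + 1)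
      omega
    rw [Finset.mem_filter]
    refine ⟨(mem_skew_s11 hs htt).mpr ⟨?_, ?_⟩, ?_, ?_⟩
    · rw [hq1]
      have := le_max_right (lo w) (mm lam w + specf lam w)
      omega
    · rw [hq1]; omega
    · rw [hq1]
      have := le_max_left (lo w) (mm lam w + specf lam w)
      omega
    · unfold Tabf
      rw [if_neg hspec, hq1]
  by_cases hneg : NegR lam w ∧ lo (Bmf lam w) ≤ mm lam (Bmf lam w)
  · rw [if_pos hneg]
    set pt : ℕ × ℕ := (Bmf lam w, mm lam (Bmf lam w)) with hpt
    have hBpos : PosR lam (Bmf lam w) := Bmf_posR htt hneg.1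
    have hwB : w < Bmf lam w := lt_Bmf htt hneg.1
    have hptS1 : pt ∉ S1 := by
      rw [hmemS1]
      rintro ⟨h1, -⟩
      rw [hpt] at h1
      simp only at h1
      omega
    have hset : (skewCells lam (deltaSq lam)).filter
        (fun q => lo q.1 ≤ q.2 ∧ Tabf lam q = w + 1) = insert pt S1 := by
      apply Finset.ext
      intro q
      rw [Finset.mem_insert, Finset.mem_filter]
      constructor
      · rintro ⟨hsk, hlo, htab⟩
        rw [mem_skew_s11 hs htt] at hsk
        unfold Tabf at htab
        by_cases hspec : PosR lam q.1 ∧ q.2 = mm lam q.1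
        · rw [if_pos hspec] at htab
          have hav : avf lam q.1 = w := by omega
          left
          have hB : Bmf lam w = q.1 := by rw [← hav, Bmf_avf htt hspec.1]
          rw [hpt, hB, ← hspec.2]
        · rw [if_neg hspec] at htab
          right
          rw [hmemS1]
          have hq1 : q.1 = w := by omega
          refine ⟨hq1, ?_, by rw [← hq1]; exact hsk.2⟩
          apply max_le
          · rw [← hq1]; exact hlo
          · rw [← hq1]
            unfold specf
            by_cases hP : PosR lam q.1
            · rw [if_pos hP]
              have : q.2 ≠ mm lam q.1 := fun hc => hspec ⟨hP, hc⟩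
              have := hsk.1
              omega
            · rw [if_neg hP]
              exact hsk.1
      · rintro (rfl | hq)
        · have hLfB : Lf lam (Bmf lam w) = 2 * mm lam (Bmf lam w) + 1 := Lf_of_pos hBpos
          refine ⟨(mem_skew_s11 hs htt).mpr ?_, hneg.2, ?_⟩
          · show mm lam (Bmf lam w) ≤ mm lam (Bmf lam w) ∧ mm lam (Bmf lam w) < Lf lam (Bmf lam w)
            omega
          · show Tabf lam (Bmf lam w, mm lam (Bmf lam w)) = w + 1
            unfold Tabf
            rw [if_pos ⟨hBpos, rfl⟩, avf_Bmf htt hneg.1]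
        · exact Finset.mem_filter.mp (hS1mem q hq)
    rw [hset, Finset.card_insert_of_notMem hptS1, hcard1]
  · rw [if_neg hneg]
    have hset : (skewCells lam (deltaSq lam)).filter
        (fun q => lo q.1 ≤ q.2 ∧ Tabf lam q = w + 1) = S1 := by
      apply Finset.ext
      intro q
      rw [Finset.mem_filter]
      constructor
      · rintro ⟨hsk, hlo, htab⟩
        rw [mem_skew_s11 hs htt] at hsk
        unfold Tabf at htab
        by_cases hspec : PosR lam q.1 ∧ q.2 = mm lam q.1
        · exfalso
          rw [if_pos hspec] at htab
          have hav : avf lam q.1 = w := by omega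
          have hB : Bmf lam w = q.1 := by rw [← hav, Bmf_avf htt hspec.1]
          apply hneg
          constructor
          · rw [← hav]; exact avf_negR htt hspec.1
          · rw [hB, ← hspec.2]; exact hlo
        · rw [if_neg hspec] at htab
          rw [hmemS1]
          have hq1 : q.1 = w := by omega
          refine ⟨hq1, ?_, by rw [← hq1]; exact hsk.2⟩
          apply max_le
          · rw [← hq1]; exact hlo
          · rw [← hq1]
            unfold specf
            by_cases hP : PosR lam q.1
            · rw [if_pos hP]
              have : q.2 ≠ mm lam q.1 := fun hc => hspec ⟨hP, hc⟩
              have := hsk.1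
              omega
            · rw [if_neg hP]
              exact hsk.1
      · intro hq
        exact Finset.mem_filter.mp (hS1mem q hq)
    rw [hset, hcard1]
    omega
/-! ### the five conditions -/

lemma Tabf_eval (i j : ℕ) :
    Tabf lam (i, j) = if PosR lam i ∧ j = mm lam i then avf lam i + 1 else i + 1 := rfl

lemma content (hs : lam.Pairwise (· ≥ ·)) (htt : tt lam = 2 * zz lam) (v : ℕ) :
    ((skewCells lam (deltaSq lam)).filter (fun p => Tabf lam p = v + 1)).card
    = (deltaSq lam).getD v 0 := by
  rw [deltaSq_getD hs htt]
  have hfc : (skewCells lam (deltaSq lam)).filter (fun p => Tabf lam p = v + 1)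
      = (skewCells lam (deltaSq lam)).filter
          (fun q => (fun _ => 0) q.1 ≤ q.2 ∧ Tabf lam q = v + 1) := by
    ext q
    simp only [Finset.mem_filter]
    constructor
    · rintro ⟨h1, h2⟩; exact ⟨h1, Nat.zero_le _, h2⟩
    · rintro ⟨h1, -, h2⟩; exact ⟨h1, h2⟩
  rw [hfc, card_row hs htt (fun _ => 0) v]
  rw [max_eq_right (Nat.zero_le _)]
  rcases NegR_or (lam := lam) v with h | h | h
  · rw [if_pos ⟨h, Nat.zero_le _⟩]
    have h1 := Lf_of_neg h
    have h2 := mm_pos_of_neg h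
    have h3 : specf lam v = 0 := by unfold specf; rw [if_neg (fun h' => not_neg_pos h h')]
    omega
  · rw [if_neg (fun hc => not_neg_pos hc.1 h)]
    have h1 := Lf_of_pos h
    have h3 : specf lam v = 1 := by unfold specf; rw [if_pos h]
    omega
  · rw [if_neg (fun hc => h hc.1.1)]
    have h1 := Lf_of_even h
    have h3 : specf lam v = 0 := by unfold specf; rw [if_neg (fun h' => h h'.1)]
    omega

variable (lam) in
def lof (pp : ℕ × ℕ) (i : ℕ) : ℕ :=
  if i < pp.1 then 0 else if i = pp.1 then pp.2 else Lf lam i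

lemma lof_lt {pp : ℕ × ℕ} {i : ℕ} (h : i < pp.1) : lof lam pp i = 0 := by
  unfold lof; rw [if_pos h]

lemma lof_eq {pp : ℕ × ℕ} : lof lam pp pp.1 = pp.2 := by
  unfold lof; rw [if_neg (by omega), if_pos rfl]

lemma lof_gt {pp : ℕ × ℕ} {i : ℕ} (h : pp.1 < i) : lof lam pp i = Lf lam i := by
  unfold lof; rw [if_neg (by omega), if_neg (by omega)]

lemma ballot (hs : lam.Pairwise (· ≥ ·)) (htt : tt lam = 2 * zz lam) {pp : ℕ × ℕ}
    (hpp : pp ∈ skewCells lam (deltaSq lam)) (v : ℕ) :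
    ((skewCells lam (deltaSq lam)).filter
        (fun q => readsBefore q pp ∧ Tabf lam q = v + 2)).card ≤
    ((skewCells lam (deltaSq lam)).filter
        (fun q => readsBefore q pp ∧ Tabf lam q = v + 1)).card := by
  have hsk := (mem_skew_s11 hs htt).mp hpp
  have hconv : ∀ w, (skewCells lam (deltaSq lam)).filter
        (fun q => readsBefore q pp ∧ Tabf lam q = w)
      = (skewCells lam (deltaSq lam)).filter
        (fun q => lof lam pp q.1 ≤ q.2 ∧ Tabf lam q = w) := by
    intro w
    ext q
    simp only [Finset.mem_filter]
    constructor
    · rintro ⟨h1, h2, h3⟩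
      refine ⟨h1, ?_, h3⟩
      rcases h2 with h2 | ⟨h2a, h2b⟩
      · rw [lof_lt h2]; exact Nat.zero_le _
      · rw [h2a, lof_eq]; exact h2b
    · rintro ⟨h1, h2, h3⟩
      refine ⟨h1, ?_, h3⟩
      have hq := (mem_skew_s11 hs htt).mp h1
      unfold readsBefore
      by_cases hc : q.1 < pp.1
      · exact Or.inl hc
      · by_cases hc2 : q.1 = pp.1
        · rw [hc2, lof_eq] at h2; exact Or.inr ⟨hc2, h2⟩
        · rw [lof_gt (by omega)] at h2; omega
  rw [hconv (v+2), hconv (v+1)]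
  have e2 : v + 2 = (v + 1) + 1 := rfl
  rw [e2, card_row hs htt (lof lam pp) (v+1), card_row hs htt (lof lam pp) v]
  have hSgt : ∀ w, NegR lam w → pp.1 < Bmf lam w →
      ¬ (lof lam pp (Bmf lam w) ≤ mm lam (Bmf lam w)) := by
    intro w hw hB hcon
    rw [lof_gt hB] at hcon
    have := Lf_of_pos (Bmf_posR htt hw)
    omega
  rcases Nat.lt_trichotomy (v+1) pp.1 with hcase | hcase | hcase
  · have hA1 : Lf lam (v+1) - max (lof lam pp (v+1)) (mm lam (v+1) + specf lam (v+1))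
        = Ccf lam (v+1) := by
      rw [lof_lt hcase, max_eq_right (Nat.zero_le _), Cc_eq]
    have hA0 : Lf lam v - max (lof lam pp v) (mm lam v + specf lam v) = Ccf lam v := by
      rw [lof_lt (by omega), max_eq_right (Nat.zero_le _), Cc_eq]
    rw [hA1, hA0]
    have hCm := Cc_mono hs (v := v)
    by_cases hS : NegR lam (v+1) ∧ lof lam pp (Bmf lam (v+1)) ≤ mm lam (Bmf lam (v+1))
    · rw [if_pos hS]
      by_cases hNv : NegR lam v
      · have hBlt : Bmf lam v < Bmf lam (v+1) := Bmf_mono_adj htt hNv hS.1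
        have hBle : Bmf lam (v+1) ≤ pp.1 := by
          by_contra hc
          exact hSgt (v+1) hS.1 (by omega) hS.2
        have hBv : Bmf lam v < pp.1 := by omega
        rw [if_pos ⟨hNv, by rw [lof_lt hBv]; exact Nat.zero_le _⟩]
        omega
      · have h1 : Ccf lam v = mm lam v := by unfold Ccf; rw [if_neg hNv]; omega
        have h2 : Ccf lam (v+1) = mm lam (v+1) - 1 := by unfold Ccf; rw [if_pos hS.1]
        have h3 := mm_pos_of_neg hS.1
        have h4 : mm lam (v+1) ≤ mm lam v := mm_anti hs (by omega)
        omega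
    · rw [if_neg hS]
      omega
  · have hS1 : (if NegR lam (v+1) ∧ lof lam pp (Bmf lam (v+1)) ≤ mm lam (Bmf lam (v+1))
        then 1 else 0) = 0 := by
      rw [if_neg]
      rintro ⟨hn, hc⟩
      exact hSgt _ hn (by have := lt_Bmf htt hn; omega) hc
    have hA1le : Lf lam (v+1) - max (lof lam pp (v+1)) (mm lam (v+1) + specf lam (v+1))
        ≤ Ccf lam (v+1) := by
      rw [← Cc_eq]
      exact Nat.sub_le_sub_left (le_max_right _ _) _
    have hA0 : Lf lam v - max (lof lam pp v) (mm lam v + specf lam v) = Ccf lam v := by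
      rw [lof_lt (by omega), max_eq_right (Nat.zero_le _), Cc_eq]
    have hCm := Cc_mono hs (v := v)
    rw [hS1, hA0]
    omega
  · have hA1 : Lf lam (v+1) - max (lof lam pp (v+1)) (mm lam (v+1) + specf lam (v+1)) = 0 := by
      apply Nat.sub_eq_zero_of_le
      calc Lf lam (v+1) = lof lam pp (v+1) := (lof_gt hcase).symm
        _ ≤ _ := le_max_left _ _
    have hS1 : (if NegR lam (v+1) ∧ lof lam pp (Bmf lam (v+1)) ≤ mm lam (Bmf lam (v+1))
        then 1 else 0) = 0 := by
      rw [if_neg]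
      rintro ⟨hn, hc⟩
      exact hSgt _ hn (by have := lt_Bmf htt hn; omega) hc
    rw [hA1, hS1]
    exact Nat.zero_le _

lemma tab_pos : ∀ q : ℕ × ℕ, 1 ≤ Tabf lam q := by
  intro q; unfold Tabf; split <;> omega

lemma tab_row (hs : lam.Pairwise (· ≥ ·)) (htt : tt lam = 2 * zz lam) (i j j' : ℕ)
    (hj : (i, j) ∈ skewCells lam (deltaSq lam)) (hj' : (i, j') ∈ skewCells lam (deltaSq lam))
    (hle : j ≤ j') : Tabf lam (i, j) ≤ Tabf lam (i, j') := by
  have h1 := (mem_skew_s11 hs htt).mp hj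
  have h2 := (mem_skew_s11 hs htt).mp hj'
  simp only at h1 h2
  rw [Tabf_eval, Tabf_eval]
  by_cases hR : PosR lam i ∧ j' = mm lam i
  · have hj_eq : j = mm lam i := by omega
    rw [if_pos ⟨hR.1, hj_eq⟩, if_pos hR]
  · rw [if_neg hR]
    by_cases hL : PosR lam i ∧ j = mm lam i
    · rw [if_pos hL]
      have := avf_lt htt hL.1
      omega
    · rw [if_neg hL]

lemma tab_col (hs : lam.Pairwise (· ≥ ·)) (htt : tt lam = 2 * zz lam) (i i' j : ℕ)
    (h1 : (i, j) ∈ skewCells lam (deltaSq lam)) (h2 : (i', j) ∈ skewCells lam (deltaSq lam))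
    (hlt : i < i') : Tabf lam (i, j) < Tabf lam (i', j) := by
  have hs1 := (mem_skew_s11 hs htt).mp h1
  have hs2 := (mem_skew_s11 hs htt).mp h2
  simp only at hs1 hs2
  rw [Tabf_eval, Tabf_eval]
  by_cases hR : PosR lam i' ∧ j = mm lam i'
  · have hmm_le : mm lam i' ≤ mm lam i := mm_anti hs (le_of_lt hlt)
    have hc : mm lam i = mm lam i' := by omega
    have hLfi' : Lf lam i' = 2 * mm lam i' + 1 := Lf_of_pos hR.1
    have hLf_le : Lf lam i' ≤ Lf lam i := Lf_anti hs (le_of_lt hlt)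
    have hPi : PosR lam i := by
      rcases NegR_or (lam := lam) i with h | h | h
      · exfalso; have := Lf_of_neg h; have := mm_pos_of_neg h; omega
      · exact h
      · exfalso; have := Lf_of_even h; omega
    rw [if_pos ⟨hPi, by omega⟩, if_pos hR]
    have := avf_strict htt hPi hR.1 hlt
    omega
  · rw [if_neg hR]
    by_cases hL : PosR lam i ∧ j = mm lam i
    · rw [if_pos hL]; have := avf_lt htt hL.1; omega
    · rw [if_neg hL]; omega
end LRAux
end PaperNote

open PaperNote in
/-- Let `λ` be a partition of `2n`.  Then `χ^{Δ²(λ)} × χ^{Δ²(λ)}` is a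
constituent of the restriction of `χ^λ` to `S_n × S_n`; equivalently, the
Littlewood–Richardson coefficient `c^λ_{Δ²(λ),Δ²(λ)}` is positive, i.e. there is a
Littlewood–Richardson configuration of type `Δ²(λ)` for `[λ ∖ Δ²(λ)]`. -/
theorem lr_coefficient_deltaSq_positive
    (n : ℕ) (lam : List ℕ) (hlam : IsPartition lam (2 * n)) :
    ∃ T : ℕ × ℕ → ℕ, IsLRTableau lam (deltaSq lam) (deltaSq lam) T := by
  obtain ⟨hs, hpos, hsum⟩ := hlam
  have htt : PaperNote.tt lam = 2 * PaperNote.zz lam := PaperNote.tt_even hsum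
  refine ⟨PaperNote.Tabf lam, ?_, ?_, ?_, ?_, ?_⟩
  · intro p _
    exact PaperNote.tab_pos p
  · intro i j j' hj hj' hle
    exact PaperNote.tab_row hs htt i j j' hj hj' hle
  · intro i i' j h1 h2 hlt
    exact PaperNote.tab_col hs htt i i' j h1 h2 hlt
  · intro v
    exact PaperNote.content hs htt v
  · intro p hp v
    exact PaperNote.ballot hs htt hp v
end

section
/- Let k ≥ 1 and n = 2^k. A partition λ of n satisfies: χ^λ has odd degree if and only if λ is a hook partition, i.e., λ = (n−x, 1^x) for some 0 ≤ x ≤ n−1. -/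
namespace OddHook
open Finset PaperNote

/-- the `i`-th beta number -/
def bet (l : List ℕ) (i : ℕ) : ℕ := l.getD i 0 + (l.length - 1 - i)

lemma getD_anti {l : List ℕ} (hs : l.Pairwise (· ≥ ·)) {i t : ℕ} (h : i ≤ t) :
    l.getD t 0 ≤ l.getD i 0 := by
  rcases lt_or_ge t l.length with ht | ht
  · have hi : i < l.length := lt_of_le_of_lt h ht
    rw [List.getD_eq_getElem l 0 ht, List.getD_eq_getElem l 0 hi]
    rcases eq_or_lt_of_le h with rfl | hlt
    · exact le_refl _
    · have := List.Pairwise.rel_get_of_lt hs (a := ⟨i, hi⟩) (b := ⟨t, ht⟩) hlt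
      simpa using this
  · rw [List.getD_eq_default l 0 ht]; exact Nat.zero_le _

lemma getD_pos {l : List ℕ} (hp : ∀ a ∈ l, 0 < a) {i : ℕ} (hi : i < l.length) :
    0 < l.getD i 0 := by
  rw [List.getD_eq_getElem l 0 hi]
  exact hp _ (List.getElem_mem _)

lemma countP_eq_card (p : ℕ → Bool) :
    ∀ l : List ℕ, l.countP p = ((Finset.range l.length).filter (fun s => p (l.getD s 0))).card := by
  intro l
  induction l with
  | nil => simp
  | cons a t ih =>
    rw [List.countP_cons]
    have : ((Finset.range (a :: t).length).filter
        (fun s => p ((a :: t).getD s 0))).card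
        = ∑ s ∈ Finset.range (t.length + 1), if p ((a :: t).getD s 0) then 1 else 0 := by
      rw [Finset.card_filter]; rfl
    rw [this, Finset.sum_range_succ']
    simp only [List.getD_cons_succ, List.getD_cons_zero]
    rw [← Finset.card_filter, ← ih]

lemma conj_eq_card (l : List ℕ) (j : ℕ) :
    conj l j = ((Finset.range l.length).filter (fun s => j < l.getD s 0)).card := by
  rw [conj, countP_eq_card]
  congr 1; ext s; simp

lemma lt_conj_iff {l : List ℕ} (hs : l.Pairwise (· ≥ ·)) {i : ℕ} (hi : i < l.length) (j : ℕ) :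
    j < l.getD i 0 ↔ i < conj l j := by
  rw [conj_eq_card]
  constructor
  · intro h
    have hsub : Finset.range (i + 1) ⊆
        (Finset.range l.length).filter (fun s => j < l.getD s 0) := by
      intro s hsm
      rw [Finset.mem_range] at hsm
      rw [Finset.mem_filter, Finset.mem_range]
      exact ⟨lt_of_le_of_lt (Nat.lt_succ_iff.mp hsm) hi,
        lt_of_lt_of_le h (getD_anti hs (Nat.lt_succ_iff.mp hsm))⟩
    have := Finset.card_le_card hsub
    rw [Finset.card_range] at this
    omega
  · intro h
    by_contra hc
    push_neg at hc
    have hsub : (Finset.range l.length).filter (fun s => j < l.getD s 0) ⊆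
        Finset.range i := by
      intro s hsm
      rw [Finset.mem_filter, Finset.mem_range] at hsm
      rw [Finset.mem_range]
      by_contra hsi
      push_neg at hsi
      exact absurd (lt_of_lt_of_le hsm.2 (getD_anti hs hsi)) (not_lt.mpr hc)
    have := Finset.card_le_card hsub
    rw [Finset.card_range] at this
    omega

lemma conj_le_length (l : List ℕ) (j : ℕ) : conj l j ≤ l.length :=
  List.countP_le_length

lemma conj_anti (l : List ℕ) {j j' : ℕ} (h : j ≤ j') : conj l j' ≤ conj l j := by
  apply List.countP_mono_left
  intro a _ ha
  simp only [decide_eq_true_eq] at *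
  omega

lemma bet_strict_anti {l : List ℕ} (hs : l.Pairwise (· ≥ ·)) {i t : ℕ}
    (hit : i < t) (ht : t < l.length) : bet l t < bet l i := by
  have h1 : l.getD t 0 ≤ l.getD i 0 := getD_anti hs (le_of_lt hit)
  unfold bet; omega

lemma bet_anti {l : List ℕ} (hs : l.Pairwise (· ≥ ·)) {i t : ℕ} (hit : i ≤ t) :
    bet l t ≤ bet l i := by
  have h1 : l.getD t 0 ≤ l.getD i 0 := getD_anti hs hit
  unfold bet; omega

lemma bet_pos {l : List ℕ} (hp : ∀ a ∈ l, 0 < a) {i : ℕ} (hi : i < l.length) :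
    0 < bet l i := by
  have := getD_pos hp hi; unfold bet; omega

lemma sum_getD (l : List ℕ) : ∑ i ∈ Finset.range l.length, l.getD i 0 = l.sum := by
  induction l with
  | nil => simp
  | cons a t ih =>
    rw [List.length_cons, Finset.sum_range_succ']
    simp only [List.getD_cons_succ, List.getD_cons_zero, List.sum_cons, ih]
    omega

lemma sum_bet (l : List ℕ) :
    ∑ i ∈ Finset.range l.length, bet l i = l.sum + ∑ i ∈ Finset.range l.length, i := by
  unfold bet
  rw [Finset.sum_add_distrib, sum_getD]
  congr 1
  rw [← Finset.sum_range_reflect]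
  apply Finset.sum_congr rfl
  intro i hi
  rw [Finset.mem_range] at hi
  omega

lemma sum_pos_length_le (l : List ℕ) (hp : ∀ a ∈ l, 0 < a) : l.length ≤ l.sum := by
  induction l with
  | nil => simp
  | cons a t ih =>
    simp only [List.length_cons, List.sum_cons]
    have ha := hp a (by simp)
    have := ih (fun x hx => hp x (List.mem_cons_of_mem _ hx))
    omega

lemma bet_le_sum {l : List ℕ} (hs : l.Pairwise (· ≥ ·)) (hp : ∀ a ∈ l, 0 < a)
    {i : ℕ} (hi : i < l.length) : bet l i ≤ l.sum := by
  have h0 : bet l i ≤ bet l 0 := bet_anti hs (Nat.zero_le i)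
  have hl : 0 < l.length := Nat.pos_of_ne_zero (by rintro h; rw [h] at hi; omega)
  -- bet l 0 = l.getD 0 0 + (l.length - 1) ≤ l.sum
  have : l.getD 0 0 + (l.length - 1) ≤ l.sum := by
    have := sum_getD l
    have hsplit : ∑ i ∈ Finset.range l.length, l.getD i 0
        = l.getD 0 0 + ∑ i ∈ Finset.range (l.length - 1), l.getD (i + 1) 0 := by
      obtain ⟨m, hm⟩ : ∃ m, l.length = m + 1 := ⟨l.length - 1, by omega⟩
      rw [hm, Finset.sum_range_succ']
      simp; omega
    have hge : ∀ i ∈ Finset.range (l.length - 1), 1 ≤ l.getD (i + 1) 0 := by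
      intro i him
      rw [Finset.mem_range] at him
      exact getD_pos hp (by omega)
    have := Finset.card_nsmul_le_sum (Finset.range (l.length - 1)) _ 1 hge
    simp only [Finset.card_range, smul_eq_mul, mul_one] at this
    omega
  unfold bet at *; omega

end OddHook
namespace OddHook
open Finset PaperNote

/-- excluded values in row `i` -/
def dset (l : List ℕ) (i : ℕ) : Finset ℕ :=
  (Finset.Ioo i l.length).image fun t => bet l i - bet l t

/-- the set of hook lengths in row `i` -/
def rowS (l : List ℕ) (i : ℕ) : Finset ℕ := Finset.Icc 1 (bet l i) \ dset l i

section rows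
variable {l : List ℕ} (hs : l.Pairwise (· ≥ ·)) (hp : ∀ a ∈ l, 0 < a)

include hs

lemma hook_eq {i j : ℕ} (hi : i < l.length) (hj : j < l.getD i 0) :
    hook l i j + 1 + j + i = l.getD i 0 + conj l j := by
  have h1 : i < conj l j := (lt_conj_iff hs hi j).mp hj
  unfold hook; omega

lemma hook_mem_Icc {i j : ℕ} (hi : i < l.length) (hj : j < l.getD i 0) :
    hook l i j ∈ Finset.Icc 1 (bet l i) := by
  have h1 : i < conj l j := (lt_conj_iff hs hi j).mp hj
  have h2 : conj l j ≤ l.length := conj_le_length l j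
  have h3 := hook_eq hs hi hj
  rw [Finset.mem_Icc]
  unfold bet; omega

lemma hook_strict_anti {i j j' : ℕ} (hi : i < l.length) (hjj : j < j')
    (hj' : j' < l.getD i 0) : hook l i j' < hook l i j := by
  have hj : j < l.getD i 0 := lt_trans hjj hj'
  have h3 := hook_eq hs hi hj
  have h4 := hook_eq hs hi hj'
  have h5 : conj l j' ≤ conj l j := conj_anti l (le_of_lt hjj)
  omega

lemma hook_not_mem_dset {i j : ℕ} (hi : i < l.length) (hj : j < l.getD i 0) :
    hook l i j ∉ dset l i := by
  rw [dset, Finset.mem_image]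
  rintro ⟨t, htm, hteq⟩
  rw [Finset.mem_Ioo] at htm
  have hbt : bet l t < bet l i := bet_strict_anti hs htm.1 htm.2
  have h3 := hook_eq hs hi hj
  -- hteq : bet l i - bet l t = hook l i j
  -- so conj l j + l.getD t 0 = j + t + 1, impossible
  have hkey : conj l j + l.getD t 0 = j + t + 1 := by
    have h1 : l.getD t 0 ≤ l.getD i 0 := getD_anti hs (le_of_lt htm.1)
    unfold bet at hteq hbt
    omega
  rcases lt_or_ge j (l.getD t 0) with hc | hc
  · have := (lt_conj_iff hs htm.2 j).mp hc
    omega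
  · have := (lt_conj_iff hs htm.2 j).not.mp (not_lt.mpr hc)
    push_neg at this
    omega

lemma dset_subset {i : ℕ} (hi : i < l.length) : dset l i ⊆ Finset.Icc 1 (bet l i) := by
  intro x hx
  rw [dset, Finset.mem_image] at hx
  obtain ⟨t, htm, rfl⟩ := hx
  rw [Finset.mem_Ioo] at htm
  have := bet_strict_anti hs htm.1 htm.2
  rw [Finset.mem_Icc]; omega

lemma dset_card {i : ℕ} (hi : i < l.length) :
    (dset l i).card = l.length - 1 - i := by
  have hinj : Set.InjOn (fun t => bet l i - bet l t) (Finset.Ioo i l.length) := by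
    intro t ht t' ht' he
    rw [Finset.coe_Ioo, Set.mem_Ioo] at ht ht'
    have h1 := bet_strict_anti hs ht.1 ht.2
    have h2 := bet_strict_anti hs ht'.1 ht'.2
    simp only at he
    by_contra hne
    rcases lt_or_gt_of_ne hne with hlt | hlt
    · have := bet_strict_anti hs hlt ht'.2; omega
    · have := bet_strict_anti hs hlt ht.2; omega
  rw [dset, Finset.card_image_of_injOn hinj, Nat.card_Ioo]
  omega

lemma rowS_card (hi : i < l.length) : (rowS l i).card = l.getD i 0 := by
  rw [rowS, Finset.card_sdiff_of_subset (dset_subset hs hi), dset_card hs hi, Nat.card_Icc]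
  unfold bet; omega

lemma hook_image (hi : i < l.length) :
    (Finset.range (l.getD i 0)).image (hook l i) = rowS l i := by
  apply Finset.eq_of_subset_of_card_le
  · intro x hx
    rw [Finset.mem_image] at hx
    obtain ⟨j, hj, rfl⟩ := hx
    rw [Finset.mem_range] at hj
    rw [rowS, Finset.mem_sdiff]
    exact ⟨hook_mem_Icc hs hi hj, hook_not_mem_dset hs hi hj⟩
  · have hinj : Set.InjOn (hook l i) (Finset.range (l.getD i 0)) := by
      intro j hj j' hj' he
      rw [Finset.coe_range, Set.mem_Iio] at hj hj'
      by_contra hne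
      rcases lt_or_gt_of_ne hne with hlt | hlt
      · have := hook_strict_anti hs hi hlt hj'; omega
      · have := hook_strict_anti hs hi hlt hj; omega
    rw [rowS_card hs hi, Finset.card_image_of_injOn hinj, Finset.card_range]

lemma hook_row_prod {M : Type*} [CommMonoid M] (F : ℕ → M) (hi : i < l.length) :
    ∏ j ∈ Finset.range (l.getD i 0), F (hook l i j) = ∏ h ∈ rowS l i, F h := by
  rw [← hook_image hs hi]
  rw [Finset.prod_image]
  intro j hj j' hj' he
  rw [Finset.mem_coe, Finset.mem_range] at hj hj'
  by_contra hne
  rcases lt_or_gt_of_ne hne with hlt | hlt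
  · have := hook_strict_anti hs hi hlt hj'; omega
  · have := hook_strict_anti hs hi hlt hj; omega

include hp

lemma rowS_pos (hi : i < l.length) {h : ℕ} (hh : h ∈ rowS l i) : 1 ≤ h := by
  rw [rowS, Finset.mem_sdiff, Finset.mem_Icc] at hh
  exact hh.1.1

lemma rowS_le (hi : i < l.length) {h : ℕ} (hh : h ∈ rowS l i) : h ≤ l.sum := by
  rw [rowS, Finset.mem_sdiff, Finset.mem_Icc] at hh
  exact le_trans hh.1.2 (bet_le_sum hs hp hi)

end rows
end OddHook
namespace OddHook
open Finset PaperNote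

lemma prod_Icc_one_id (m : ℕ) : ∏ h ∈ Finset.Icc 1 m, h = Nat.factorial m := by
  rw [← Finset.prod_range_add_one_eq_factorial]
  apply Finset.prod_nbij' (fun h => h - 1) (fun x => x + 1)
  · intro a ha; rw [Finset.mem_Icc] at ha; rw [Finset.mem_range]; omega
  · intro a ha; rw [Finset.mem_range] at ha; rw [Finset.mem_Icc]; omega
  · intro a ha; rw [Finset.mem_Icc] at ha; omega
  · intro a _; omega
  · intro a ha; rw [Finset.mem_Icc] at ha; omega

/-- product of all hook lengths -/
def Pd (l : List ℕ) : ℕ := ∏ p ∈ cells l, hook l p.1 p.2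

/-- the "Vandermonde" product of beta-number differences -/
def Vd (l : List ℕ) : ℕ :=
  ∏ i ∈ Finset.range l.length, ∏ t ∈ Finset.Ioo i l.length, (bet l i - bet l t)

section prods
variable {l : List ℕ} (hs : l.Pairwise (· ≥ ·)) (hp : ∀ a ∈ l, 0 < a)

include hs

lemma prod_cells {M : Type*} [CommMonoid M] (F : ℕ → ℕ → M) :
    ∏ p ∈ cells l, F p.1 p.2
      = ∏ i ∈ Finset.range l.length, ∏ j ∈ Finset.range (l.getD i 0), F i j := by
  rw [cells, Finset.prod_filter, Finset.prod_product]
  apply Finset.prod_congr rfl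
  intro i hi
  rw [Finset.mem_range] at hi
  rw [← Finset.prod_filter]
  have hle : l.getD i 0 ≤ l.getD 0 0 := getD_anti hs (Nat.zero_le i)
  have : (Finset.range (l.getD 0 0)).filter (fun j => j < l.getD i 0)
      = Finset.range (l.getD i 0) := by
    ext j
    simp only [Finset.mem_filter, Finset.mem_range]
    omega
  rw [this]

lemma Pd_eq : Pd l = ∏ i ∈ Finset.range l.length, ∏ h ∈ rowS l i, h := by
  rw [Pd, prod_cells hs]
  apply Finset.prod_congr rfl
  intro i hi
  rw [Finset.mem_range] at hi
  exact hook_row_prod hs id hi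

lemma prod_rowS_mul_dset (hi : i < l.length) :
    (∏ h ∈ rowS l i, h) * (∏ t ∈ Finset.Ioo i l.length, (bet l i - bet l t))
      = Nat.factorial (bet l i) := by
  have h1 : ∏ t ∈ Finset.Ioo i l.length, (bet l i - bet l t) = ∏ h ∈ dset l i, h := by
    rw [dset, Finset.prod_image]
    intro t ht t' ht' he
    rw [Finset.mem_coe, Finset.mem_Ioo] at ht ht'
    simp only at he
    have h1 := bet_strict_anti hs ht.1 ht.2
    have h2 := bet_strict_anti hs ht'.1 ht'.2
    by_contra hne
    rcases lt_or_gt_of_ne hne with hlt | hlt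
    · have := bet_strict_anti hs hlt ht'.2; omega
    · have := bet_strict_anti hs hlt ht.2; omega
  rw [h1, rowS, Finset.prod_sdiff (dset_subset hs hi)]
  exact prod_Icc_one_id (bet l i)

lemma Pd_mul_Vd : Pd l * Vd l = ∏ i ∈ Finset.range l.length, Nat.factorial (bet l i) := by
  rw [Pd_eq hs, Vd, ← Finset.prod_mul_distrib]
  apply Finset.prod_congr rfl
  intro i hi
  rw [Finset.mem_range] at hi
  exact prod_rowS_mul_dset hs hi

lemma Vd_pos : 0 < Vd l := by
  rw [Vd]
  apply Finset.prod_pos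
  intro i hi
  apply Finset.prod_pos
  intro t ht
  rw [Finset.mem_Ioo] at ht
  have := bet_strict_anti hs ht.1 ht.2
  omega

include hp

lemma Pd_pos : 0 < Pd l := by
  rw [Pd_eq hs]
  apply Finset.prod_pos
  intro i hi
  apply Finset.prod_pos
  intro h hh
  rw [Finset.mem_range] at hi
  exact rowS_pos hs hp hi hh

end prods
end OddHook
namespace OddHook
open Finset PaperNote

section integrality
variable {l : List ℕ} (hs : l.Pairwise (· ≥ ·)) (hp : ∀ a ∈ l, 0 < a)

include hs

lemma betfac_dvd :
    (∏ i ∈ Finset.range l.length, Nat.factorial (bet l i))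
      ∣ Nat.factorial l.sum * Vd l := by
  set L := l.length with hL
  set b : Fin L → ℕ := fun i => bet l i.val with hbdef
  set v : Fin L → ℤ := fun i => (b i : ℤ) with hvdef
  -- the vandermonde determinant has absolute value Vd l
  have natAbs_prod : ∀ {α : Type} (s : Finset α) (f : α → ℤ),
      (∏ x ∈ s, f x).natAbs = ∏ x ∈ s, (f x).natAbs :=
    fun s f => map_prod Int.natAbsHom f s
  have hVd : (Matrix.vandermonde v).det.natAbs = Vd l := by
    rw [Matrix.det_vandermonde]
    rw [natAbs_prod]
    rw [Vd, ← Fin.prod_univ_eq_prod_range]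
    apply Finset.prod_congr rfl
    intro i _
    rw [natAbs_prod]
    have hmap : (Finset.Ioi i).map Fin.valEmbedding = Finset.Ioo (i : ℕ) L := by
      rw [Fin.map_valEmbedding_Ioi]
    rw [← hmap, Finset.prod_map]
    apply Finset.prod_congr rfl
    intro j hj
    rw [Finset.mem_Ioi] at hj
    have hle : b j ≤ b i := bet_anti hs (le_of_lt hj)
    simp only [Int.natAbsHom, MonoidWithZeroHom.coe_mk, ZeroHom.coe_mk, Fin.valEmbedding_apply]
    show (v j - v i).natAbs = b i - b j
    simp only [hvdef]
    omega
  -- integer divisibility via descPochhammer determinant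
  have hdvd : ((∏ i : Fin L, Nat.factorial (b i) : ℕ) : ℤ)
      ∣ ((Nat.factorial l.sum : ℕ) : ℤ) * (Matrix.vandermonde v).det := by
    rw [Matrix.det_eval_matrixOfPolynomials_eq_det_vandermonde v
      (fun i => descPochhammer ℤ (i : ℕ))
      (fun i => descPochhammer_natDegree ℤ (i : ℕ))
      (fun i => monic_descPochhammer ℤ (i : ℕ)), Matrix.det_apply, Finset.mul_sum]
    apply Finset.dvd_sum
    intro σ _
    have hprod : ∏ i, (Matrix.of fun i j : Fin L =>
        Polynomial.eval (v i) (descPochhammer ℤ (j : ℕ))) (σ i) i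
        = ((∏ i : Fin L, Nat.descFactorial (b i) ((σ⁻¹ i : Fin L) : ℕ) : ℕ) : ℤ) := by
      push_cast
      rw [← Equiv.prod_comp σ (fun i => (Nat.descFactorial (b i) ((σ⁻¹ i : Fin L) : ℕ) : ℤ))]
      apply Finset.prod_congr rfl
      intro i _
      rw [Matrix.of_apply, Equiv.Perm.inv_def, Equiv.symm_apply_apply]
      rw [hvdef]
      exact descPochhammer_eval_eq_descFactorial ℤ (b (σ i)) (i : ℕ)
    have hnat : (∏ i : Fin L, Nat.factorial (b i))
        ∣ Nat.factorial l.sum * ∏ i : Fin L, Nat.descFactorial (b i) ((σ⁻¹ i : Fin L) : ℕ) := by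
      by_cases hall : ∀ i : Fin L, ((σ⁻¹ i : Fin L) : ℕ) ≤ b i
      · have hfac : ∀ i : Fin L, Nat.factorial (b i)
            = Nat.descFactorial (b i) ((σ⁻¹ i : Fin L) : ℕ)
              * Nat.factorial (b i - ((σ⁻¹ i : Fin L) : ℕ)) := by
          intro i
          rw [mul_comm, Nat.factorial_mul_descFactorial (hall i)]
        rw [Finset.prod_congr rfl (fun i _ => hfac i), Finset.prod_mul_distrib]
        rw [mul_comm (Nat.factorial l.sum)]
        apply mul_dvd_mul_left
        have hsum : ∑ i : Fin L, (b i - ((σ⁻¹ i : Fin L) : ℕ)) = l.sum := by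
          rw [Finset.sum_tsub_distrib _ (fun i _ => hall i)]
          have h1 : ∑ i : Fin L, ((σ⁻¹ i : Fin L) : ℕ) = ∑ i : Fin L, (i : ℕ) :=
            Equiv.sum_comp σ⁻¹ (fun i : Fin L => (i : ℕ))
          have h2 : ∑ i : Fin L, b i = l.sum + ∑ i : Fin L, (i : ℕ) := by
            rw [Fin.sum_univ_eq_sum_range (fun i => bet l i) L,
              Fin.sum_univ_eq_sum_range (fun i => i) L]
            exact sum_bet l
          omega
        rw [← hsum]
        exact Nat.prod_factorial_dvd_factorial_sum _ _
      · push_neg at hall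
        obtain ⟨i, hi⟩ := hall
        have : ∏ i : Fin L, Nat.descFactorial (b i) ((σ⁻¹ i : Fin L) : ℕ) = 0 :=
          Finset.prod_eq_zero (Finset.mem_univ i)
            (Nat.descFactorial_eq_zero_iff_lt.mpr hi)
        rw [this, mul_zero]
        exact dvd_zero _
    rw [hprod]
    have hthis := Int.natCast_dvd_natCast.mpr hnat
    rw [Nat.cast_mul] at hthis
    rcases Int.units_eq_one_or (Equiv.Perm.sign σ) with hsgn | hsgn <;>
      rw [hsgn] <;>
      simp only [one_smul, Units.neg_smul, mul_neg, dvd_neg] <;> exact hthis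
  -- combine
  have := Int.natAbs_dvd_natAbs.mpr hdvd
  rw [Int.natAbs_natCast, Int.natAbs_mul, Int.natAbs_natCast, hVd] at this
  rw [← Fin.prod_univ_eq_prod_range (fun i => Nat.factorial (bet l i))]
  exact this

lemma Pd_dvd_factorial : Pd l ∣ Nat.factorial l.sum := by
  have h := betfac_dvd hs
  rw [← Pd_mul_Vd hs] at h
  exact (Nat.mul_dvd_mul_iff_right (Vd_pos hs)).mp h

end integrality
end OddHook
namespace OddHook
open Finset PaperNote

/-- 2-adic valuation -/
def nu (m : ℕ) : ℕ := m.factorization 2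

lemma nu_mul {a b : ℕ} (ha : a ≠ 0) (hb : b ≠ 0) : nu (a * b) = nu a + nu b := by
  unfold nu
  rw [Nat.factorization_mul ha hb]
  simp

lemma nu_prod {α : Type*} (s : Finset α) (f : α → ℕ) (hf : ∀ x ∈ s, f x ≠ 0) :
    nu (∏ x ∈ s, f x) = ∑ x ∈ s, nu (f x) := by
  unfold nu
  rw [Nat.factorization_prod hf]
  simp

lemma nu_factorial (m : ℕ) : nu (Nat.factorial m) = ∑ j ∈ Finset.Icc 1 m, nu j := by
  induction m with
  | zero => simp [nu]
  | succ m ih =>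
    have h1 : Finset.Icc 1 (m + 1) = insert (m + 1) (Finset.Icc 1 m) := by
      ext t; simp only [Finset.mem_Icc, Finset.mem_insert]; omega
    rw [Nat.factorial_succ, nu_mul (by omega) (Nat.factorial_ne_zero m), ih, h1,
      Finset.sum_insert (by simp)]

lemma nu_eq_card_pows {k h : ℕ} (h1 : 1 ≤ h) (h2 : h ≤ 2 ^ k) :
    nu h = ((Finset.Icc 1 k).filter (fun a => 2 ^ a ∣ h)).card := by
  have hh : h ≠ 0 := by omega
  have hnu : nu h ≤ k := by
    by_contra hc
    push_neg at hc
    have : 2 ^ (k + 1) ∣ h := (Nat.Prime.pow_dvd_iff_le_factorization Nat.prime_two hh).mpr hc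
    have := Nat.le_of_dvd (by omega) this
    have : 2 ^ k < 2 ^ (k + 1) := Nat.pow_lt_pow_succ (by omega)
    omega
  have hfil : (Finset.Icc 1 k).filter (fun a => 2 ^ a ∣ h) = Finset.Icc 1 (nu h) := by
    ext a
    simp only [Finset.mem_filter, Finset.mem_Icc]
    constructor
    · rintro ⟨⟨ha1, _⟩, hdvd⟩
      exact ⟨ha1, (Nat.Prime.pow_dvd_iff_le_factorization Nat.prime_two hh).mp hdvd⟩
    · rintro ⟨ha1, ha2⟩
      exact ⟨⟨ha1, le_trans ha2 hnu⟩,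
        (Nat.Prime.pow_dvd_iff_le_factorization Nat.prime_two hh).mpr ha2⟩
  rw [hfil, Nat.card_Icc]
  omega

lemma odd_div_iff {P N : ℕ} (hdvd : P ∣ Nat.factorial N) (hP : 0 < P) :
    (Odd (Nat.factorial N / P) ↔ nu P = nu (Nat.factorial N)) := by
  have hNf : Nat.factorial N ≠ 0 := Nat.factorial_ne_zero N
  have hq : Nat.factorial N / P ≠ 0 := by
    have := Nat.le_of_dvd (Nat.pos_of_ne_zero hNf) hdvd
    have := Nat.div_pos this hP
    omega
  have hle : nu P ≤ nu (Nat.factorial N) := by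
    unfold nu
    have := (Nat.factorization_le_iff_dvd (by omega) hNf).mpr hdvd
    exact this 2
  have hfd : nu (Nat.factorial N / P) = nu (Nat.factorial N) - nu P := by
    unfold nu
    rw [Nat.factorization_div hdvd]
    simp
  rw [← Nat.not_even_iff_odd, even_iff_two_dvd]
  have h2 : 2 ∣ Nat.factorial N / P ↔ 1 ≤ nu (Nat.factorial N / P) := by
    unfold nu
    rw [← Nat.Prime.pow_dvd_iff_le_factorization Nat.prime_two hq, pow_one]
  rw [h2, hfd]
  omega

lemma geo_sum (k : ℕ) : ∑ j ∈ Finset.range k, 2 ^ j = 2 ^ k - 1 := by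
  induction k with
  | zero => simp
  | succ k ih =>
    rw [Finset.sum_range_succ, ih]
    have : 1 ≤ 2 ^ k := Nat.one_le_two_pow
    have : 2 ^ (k + 1) = 2 * 2 ^ k := by ring
    omega

lemma geo_sum_Icc (k : ℕ) : ∑ a ∈ Finset.Icc 1 k, 2 ^ (k - a) = 2 ^ k - 1 := by
  rw [← geo_sum k]
  apply Finset.sum_nbij' (fun a => k - a) (fun j => k - j)
  · intro a ha; rw [Finset.mem_Icc] at ha; rw [Finset.mem_range]; omega
  · intro j hj; rw [Finset.mem_range] at hj; rw [Finset.mem_Icc]; omega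
  · intro a ha; rw [Finset.mem_Icc] at ha; omega
  · intro j hj; rw [Finset.mem_range] at hj; omega
  · intro a _; rfl

lemma legendre_pow_two {k : ℕ} : nu (Nat.factorial (2 ^ k)) = 2 ^ k - 1 := by
  have hfact : Fact (Nat.Prime 2) := ⟨Nat.prime_two⟩
  have hlog : Nat.log 2 (2 ^ k) < k + 1 := by
    rw [Nat.log_pow (by omega)]
    omega
  have := @padicValNat_factorial 2 (2 ^ k) (k + 1) hfact hlog
  unfold nu
  rw [Nat.factorization_def _ Nat.prime_two, this]
  have hconv : ∀ i ∈ Finset.Ico 1 (k + 1), 2 ^ k / 2 ^ i = 2 ^ (k - i) := by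
    intro i hi
    rw [Finset.mem_Ico] at hi
    rw [Nat.pow_div (by omega) (by omega)]
  rw [Finset.sum_congr rfl hconv]
  have : Finset.Ico 1 (k + 1) = Finset.Icc 1 k := rfl
  rw [this, geo_sum_Icc]

end OddHook
namespace OddHook
open Finset PaperNote

/-- number of hook lengths divisible by `e` -/
def cnt (l : List ℕ) (e : ℕ) : ℕ :=
  ∑ i ∈ Finset.range l.length, ((rowS l i).filter (fun h => e ∣ h)).card

/-- number of beta numbers below `bet l i` congruent to it mod `e` -/
def cbelow (l : List ℕ) (e i : ℕ) : ℕ :=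
  ((Finset.range l.length).filter
    (fun t => bet l t < bet l i ∧ bet l t % e = bet l i % e)).card

lemma sum_ge_tri : ∀ (m : ℕ) (t : Finset ℕ), t.card = m →
    ∑ j ∈ Finset.range m, j ≤ ∑ x ∈ t, x := by
  intro m
  induction m with
  | zero => simp
  | succ m ih =>
    intro t ht
    have hne : t.Nonempty := by rw [← Finset.card_pos, ht]; omega
    have hMmem := t.max'_mem hne
    set M := t.max' hne with hMdef
    have hMm : m ≤ M := by
      have hsub : t ⊆ Finset.range (M + 1) := by
        intro x hx
        rw [Finset.mem_range]
        have := Finset.le_max' t x hx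
        omega
      have := Finset.card_le_card hsub
      rw [ht, Finset.card_range] at this
      omega
    have herase : (t.erase M).card = m := by
      rw [Finset.card_erase_of_mem hMmem, ht]
      omega
    have hih := ih (t.erase M) herase
    rw [Finset.sum_range_succ, ← Finset.add_sum_erase t _ hMmem]
    omega

section counting
variable {l : List ℕ} (hs : l.Pairwise (· ≥ ·)) (hp : ∀ a ∈ l, 0 < a)

include hs

lemma row_filter_card {e i : ℕ} (hi : i < l.length) :
    ((rowS l i).filter (fun h => e ∣ h)).card + cbelow l e i = bet l i / e := by
  have hIoc : Finset.Icc 1 (bet l i) = Finset.Ioc 0 (bet l i) := by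
    ext x; simp only [Finset.mem_Icc, Finset.mem_Ioc]; omega
  have hIcc_card : ((Finset.Icc 1 (bet l i)).filter (fun h => e ∣ h)).card = bet l i / e := by
    rw [hIoc]
    exact Nat.Ioc_filter_dvd_card_eq_div (bet l i) e
  have hsplit : (rowS l i).filter (fun h => e ∣ h)
      = ((Finset.Icc 1 (bet l i)).filter (fun h => e ∣ h))
        \ ((dset l i).filter (fun h => e ∣ h)) := by
    ext x
    simp only [rowS, Finset.mem_filter, Finset.mem_sdiff]
    tauto
  have hsubs : (dset l i).filter (fun h => e ∣ h)
      ⊆ (Finset.Icc 1 (bet l i)).filter (fun h => e ∣ h) :=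
    Finset.filter_subset_filter _ (dset_subset hs hi)
  have hdcard : ((dset l i).filter (fun h => e ∣ h)).card = cbelow l e i := by
    rw [dset, Finset.filter_image]
    have hinj : Set.InjOn (fun t => bet l i - bet l t)
        ↑((Finset.Ioo i l.length).filter (fun t => e ∣ bet l i - bet l t)) := by
      intro t ht t' ht' he
      simp only [Finset.coe_filter, Set.mem_setOf_eq, Finset.mem_Ioo] at ht ht'
      have h1 := bet_strict_anti hs ht.1.1 ht.1.2
      have h2 := bet_strict_anti hs ht'.1.1 ht'.1.2
      simp only at he
      by_contra hne
      rcases lt_or_gt_of_ne hne with hlt | hlt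
      · have := bet_strict_anti hs hlt ht'.1.2; omega
      · have := bet_strict_anti hs hlt ht.1.2; omega
    rw [Finset.card_image_of_injOn hinj, cbelow]
    congr 1
    ext t
    simp only [Finset.mem_filter, Finset.mem_Ioo, Finset.mem_range]
    constructor
    · rintro ⟨⟨hit, htL⟩, hd⟩
      have hlt := bet_strict_anti hs hit htL
      refine ⟨htL, hlt, ?_⟩
      exact (Nat.modEq_iff_dvd' (le_of_lt hlt)).mpr hd
    · rintro ⟨htL, hlt, hmod⟩
      have hit : i < t := by
        by_contra hc
        push_neg at hc
        have := bet_anti hs hc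
        omega
      exact ⟨⟨hit, htL⟩, (Nat.modEq_iff_dvd' (le_of_lt hlt)).mp hmod⟩
  rw [hsplit, Finset.card_sdiff_of_subset hsubs, hIcc_card, hdcard]
  have hle := Finset.card_le_card hsubs
  rw [hIcc_card, hdcard] at hle
  omega

lemma phi_injOn {e : ℕ} (he : 1 ≤ e) :
    ∀ t ∈ Finset.range l.length, ∀ t' ∈ Finset.range l.length,
      bet l t % e + e * cbelow l e t = bet l t' % e + e * cbelow l e t' → t = t' := by
  have key : ∀ t t', t < l.length → t' < l.length → bet l t' < bet l t →
      bet l t % e = bet l t' % e → cbelow l e t' < cbelow l e t := by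
    intro t t' htL ht'L hlt hmod
    have hsub : insert t' ((Finset.range l.length).filter
        (fun s => bet l s < bet l t' ∧ bet l s % e = bet l t' % e))
        ⊆ (Finset.range l.length).filter
          (fun s => bet l s < bet l t ∧ bet l s % e = bet l t % e) := by
      intro s hsm
      rw [Finset.mem_insert] at hsm
      rcases hsm with rfl | hsm
      · rw [Finset.mem_filter, Finset.mem_range]
        exact ⟨ht'L, hlt, hmod.symm⟩
      · rw [Finset.mem_filter, Finset.mem_range] at hsm ⊢
        refine ⟨hsm.1, by omega, by omega⟩
    have hnm : t' ∉ (Finset.range l.length).filter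
        (fun s => bet l s < bet l t' ∧ bet l s % e = bet l t' % e) := by
      rw [Finset.mem_filter]
      rintro ⟨-, h, -⟩
      omega
    have := Finset.card_le_card hsub
    rw [Finset.card_insert_of_notMem hnm] at this
    unfold cbelow
    omega
  intro t ht t' ht' heq
  rw [Finset.mem_range] at ht ht'
  have hm1 : bet l t % e < e := Nat.mod_lt _ (by omega)
  have hm2 : bet l t' % e < e := Nat.mod_lt _ (by omega)
  have hr : bet l t % e = bet l t' % e := by
    have h1 := congrArg (fun z => z % e) heq
    simpa [Nat.add_mul_mod_self_left, Nat.mod_eq_of_lt hm1, Nat.mod_eq_of_lt hm2] using h1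
  have hc : cbelow l e t = cbelow l e t' := by
    rw [hr] at heq
    have h2 := Nat.add_left_cancel heq
    exact Nat.eq_of_mul_eq_mul_left (by omega) h2
  have hmodeq : bet l t % e = bet l t' % e ∧ cbelow l e t = cbelow l e t' := ⟨hr, hc⟩
  by_contra hne
  have hbetne : bet l t ≠ bet l t' := by
    rcases lt_or_gt_of_ne hne with hlt | hlt
    · have := bet_strict_anti hs hlt ht'; omega
    · have := bet_strict_anti hs hlt ht; omega
  rcases lt_or_gt_of_ne hbetne with hlt | hlt
  · have := key t' t ht' ht hlt hmodeq.1.symm; omega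
  · have := key t t' ht ht' hlt hmodeq.1; omega

lemma cnt_bound {e : ℕ} (he : 1 ≤ e) : e * cnt l e ≤ l.sum := by
  set L := l.length with hL
  set φ : ℕ → ℕ := fun t => bet l t % e + e * cbelow l e t with hφ
  have hkey : ∀ i ∈ Finset.range L,
      e * ((rowS l i).filter (fun h => e ∣ h)).card + φ i = bet l i := by
    intro i hi
    rw [Finset.mem_range] at hi
    have h1 := row_filter_card hs (e := e) hi
    have h2 := Nat.div_add_mod (bet l i) e
    simp only [hφ]
    nlinarith [h1, h2]
  have hsum1 : ∑ i ∈ Finset.range L, (e * ((rowS l i).filter (fun h => e ∣ h)).card + φ i)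
      = l.sum + ∑ i ∈ Finset.range L, i := by
    rw [Finset.sum_congr rfl hkey]
    exact sum_bet l
  have hphi : ∑ i ∈ Finset.range L, i ≤ ∑ i ∈ Finset.range L, φ i := by
    have himg : ((Finset.range L).image φ).card = L := by
      rw [Finset.card_image_of_injOn, Finset.card_range]
      intro t ht t' ht' heq
      exact phi_injOn hs he t (by simpa using ht) t' (by simpa using ht') heq
    have := sum_ge_tri L ((Finset.range L).image φ) himg
    rw [Finset.sum_image (fun t ht t' ht' heq => phi_injOn hs he t ht t' ht' heq)] at this
    simpa using this
  have hexp : ∑ i ∈ Finset.range L, (e * ((rowS l i).filter (fun h => e ∣ h)).card + φ i)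
      = e * cnt l e + ∑ i ∈ Finset.range L, φ i := by
    rw [Finset.sum_add_distrib, ← Finset.mul_sum, cnt]
  omega

lemma nu_Pd {k : ℕ} (hp : ∀ a ∈ l, 0 < a) (hsk : l.sum ≤ 2 ^ k) :
    nu (Pd l) = ∑ a ∈ Finset.Icc 1 k, cnt l (2 ^ a) := by
  rw [Pd_eq hs]
  rw [nu_prod _ _ (fun i hi => by
    apply Finset.prod_ne_zero_iff.mpr
    intro h hh
    rw [Finset.mem_range] at hi
    have := rowS_pos hs hp hi hh
    omega)]
  have hrow : ∀ i ∈ Finset.range l.length,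
      nu (∏ h ∈ rowS l i, h) = ∑ h ∈ rowS l i, nu h := by
    intro i hi
    rw [Finset.mem_range] at hi
    exact nu_prod _ _ (fun h hh => by have := rowS_pos hs hp hi hh; omega)
  rw [Finset.sum_congr rfl hrow]
  have hsw : ∀ i ∈ Finset.range l.length, ∑ h ∈ rowS l i, nu h
      = ∑ a ∈ Finset.Icc 1 k, ((rowS l i).filter (fun h => 2 ^ a ∣ h)).card := by
    intro i hi
    rw [Finset.mem_range] at hi
    have hh : ∀ h ∈ rowS l i, nu h = ∑ a ∈ Finset.Icc 1 k, if 2 ^ a ∣ h then 1 else 0 := by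
      intro h hh
      rw [nu_eq_card_pows (rowS_pos hs hp hi hh) (le_trans (rowS_le hs hp hi hh) hsk)]
      rw [Finset.card_filter]
    rw [Finset.sum_congr rfl hh, Finset.sum_comm]
    apply Finset.sum_congr rfl
    intro a _
    rw [Finset.card_filter]
  rw [Finset.sum_congr rfl hsw, Finset.sum_comm]
  apply Finset.sum_congr rfl
  intro a _
  rfl

end counting
end OddHook
namespace OddHook
open Finset PaperNote

lemma list_all_one : ∀ (t : List ℕ), (∀ a ∈ t, 0 < a) → t.sum = t.length →
    ∀ a ∈ t, a = 1 := by
  intro t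
  induction t with
  | nil => simp
  | cons b r ih =>
    intro hpos hsum a ha
    have hb : 0 < b := hpos b (by simp)
    have hr : r.length ≤ r.sum := sum_pos_length_le r (fun x hx => hpos x (by simp [hx]))
    simp only [List.sum_cons, List.length_cons] at hsum
    have hb1 : b = 1 := by omega
    rcases List.mem_cons.mp ha with rfl | ha
    · exact hb1
    · exact ih (fun x hx => hpos x (by simp [hx])) (by omega) a ha

lemma isHook_of_bet0 {l : List ℕ} (hp : ∀ a ∈ l, 0 < a) (hL : 0 < l.length)
    (hbet : l.getD 0 0 + (l.length - 1) = l.sum) : IsHookPartition l l.sum := by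
  rcases l with _ | ⟨a, t⟩
  · simp at hL
  refine ⟨t.length, ?_, ?_⟩
  · have ha : 0 < a := hp a (by simp)
    simp only [List.sum_cons]
    have := sum_pos_length_le t (fun x hx => hp x (by simp [hx]))
    omega
  · simp only [List.getD_cons_zero, List.length_cons, List.sum_cons] at hbet ⊢
    have htsum : t.sum = t.length := by omega
    have hall := list_all_one t (fun x hx => hp x (by simp [hx])) htsum
    have hrep : t = List.replicate t.length 1 :=
      List.eq_replicate_iff.mpr ⟨rfl, hall⟩
    have ha : a = a + t.sum - t.length := by omega
    rw [← hrep, htsum]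
    congr 1
    omega

section conv
variable {l : List ℕ} (hs : l.Pairwise (· ≥ ·)) (hp : ∀ a ∈ l, 0 < a)

include hs hp

lemma converse_dir {k : ℕ} (hk : 1 ≤ k) (hsum : l.sum = 2 ^ k)
    (hodd : Odd (charDegree l)) : IsHookPartition l (2 ^ k) := by
  have hn2 : 2 ≤ 2 ^ k := by
    have : 2 ^ 1 ≤ 2 ^ k := Nat.pow_le_pow_right (by omega) hk
    omega
  have hL : 0 < l.length := by
    rcases l with _ | _
    · simp at hsum; omega
    · simp
  have hdeg : charDegree l = Nat.factorial l.sum / Pd l := rfl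
  have hdvd : Pd l ∣ Nat.factorial l.sum := Pd_dvd_factorial hs
  have hPpos : 0 < Pd l := Pd_pos hs hp
  rw [hdeg] at hodd
  have hnuP : nu (Pd l) = nu (Nat.factorial l.sum) := (odd_div_iff hdvd hPpos).mp hodd
  rw [hsum, legendre_pow_two] at hnuP
  have hnuP2 : ∑ a ∈ Finset.Icc 1 k, cnt l (2 ^ a) = 2 ^ k - 1 := by
    rw [← nu_Pd hs hp (by omega)]
    exact hnuP
  -- upper bounds
  have hbound : ∀ a, 1 ≤ a → a ≤ k → cnt l (2 ^ a) ≤ 2 ^ (k - a) := by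
    intro a _ hak
    have h1 : 2 ^ a * cnt l (2 ^ a) ≤ 2 ^ k := by
      have := cnt_bound hs (e := 2 ^ a) Nat.one_le_two_pow
      omega
    have h2 : 2 ^ k = 2 ^ a * 2 ^ (k - a) := by
      rw [← pow_add]
      congr 1
      omega
    rw [h2] at h1
    exact Nat.le_of_mul_le_mul_left h1 (Nat.pow_pos (by omega))
  -- the top count must be at least 1
  have htop : 1 ≤ cnt l (2 ^ k) := by
    by_contra hc
    push_neg at hc
    have hzero : cnt l (2 ^ k) = 0 := by omega
    have hIcc : Finset.Icc 1 k = insert k (Finset.Icc 1 (k - 1)) := by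
      ext a
      simp only [Finset.mem_Icc, Finset.mem_insert]
      omega
    have hks : k ∉ Finset.Icc 1 (k - 1) := by
      rw [Finset.mem_Icc]; omega
    rw [hIcc, Finset.sum_insert hks, hzero, zero_add] at hnuP2
    have hle : ∑ a ∈ Finset.Icc 1 (k - 1), cnt l (2 ^ a)
        ≤ ∑ a ∈ Finset.Icc 1 (k - 1), 2 ^ (k - a) := by
      apply Finset.sum_le_sum
      intro a ha
      rw [Finset.mem_Icc] at ha
      exact hbound a ha.1 (by omega)
    have hgeo : ∑ a ∈ Finset.Icc 1 (k - 1), 2 ^ (k - a) = 2 ^ k - 2 := by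
      have h1 : Finset.Icc 1 k = insert k (Finset.Icc 1 (k - 1)) := hIcc
      have h2 := geo_sum_Icc k
      rw [h1, Finset.sum_insert hks] at h2
      have : k - k = 0 := by omega
      rw [this, pow_zero] at h2
      omega
    omega
  -- extract a hook of full length
  rw [cnt] at htop
  have hex : ∃ i ∈ Finset.range l.length, 0 < ((rowS l i).filter (fun h => 2 ^ k ∣ h)).card := by
    by_contra hc
    push_neg at hc
    have : ∑ i ∈ Finset.range l.length, ((rowS l i).filter (fun h => 2 ^ k ∣ h)).card = 0 :=
      Finset.sum_eq_zero (fun i hi => by have := hc i hi; omega)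
    omega
  obtain ⟨i, hi, hcard⟩ := hex
  rw [Finset.mem_range] at hi
  obtain ⟨h, hh⟩ := Finset.card_pos.mp hcard
  rw [Finset.mem_filter] at hh
  have h1 : 1 ≤ h := rowS_pos hs hp hi hh.1
  have h2 : h ≤ bet l i := by
    have := hh.1
    rw [rowS, Finset.mem_sdiff, Finset.mem_Icc] at this
    exact this.1.2
  have h3 : bet l i ≤ bet l 0 := bet_anti hs (Nat.zero_le i)
  have h4 : bet l 0 ≤ l.sum := bet_le_sum hs hp hL
  have h5 : 2 ^ k ≤ h := Nat.le_of_dvd (by omega) hh.2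
  have hbet0 : bet l 0 = l.sum := by omega
  rw [← hsum]
  apply isHook_of_bet0 hp hL
  unfold bet at hbet0
  omega

end conv
end OddHook
namespace OddHook
open Finset PaperNote

lemma nu_pow_sub {k m : ℕ} (h1 : 1 ≤ m) (h2 : m < 2 ^ k) : nu (2 ^ k - m) = nu m := by
  have hA1 : 1 ≤ 2 ^ k - m := by omega
  have hA2 : 2 ^ k - m ≤ 2 ^ k := by omega
  rw [nu_eq_card_pows hA1 hA2, nu_eq_card_pows (k := k) h1 (le_of_lt h2)]
  congr 1
  apply Finset.filter_congr
  intro a ha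
  rw [Finset.mem_Icc] at ha
  have hpow : (2 : ℕ) ^ a ∣ 2 ^ k := pow_dvd_pow 2 ha.2
  constructor
  · intro hd
    have := Nat.dvd_sub hpow hd
    rwa [Nat.sub_sub_self (le_of_lt h2)] at this
  · intro hd
    exact Nat.dvd_sub hpow hd

lemma forward_dir {k x : ℕ} (hk : 1 ≤ k) (hx : x ≤ 2 ^ k - 1)
    {l : List ℕ} (hldef : l = (2 ^ k - x) :: List.replicate x 1)
    (hs : l.Pairwise (· ≥ ·)) (hp : ∀ a ∈ l, 0 < a) :
    nu (Pd l) = nu (Nat.factorial (2 ^ k)) := by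
  have hn2 : 2 ≤ 2 ^ k := by
    have : (2 : ℕ) ^ 1 ≤ 2 ^ k := Nat.pow_le_pow_right (by omega) hk
    omega
  have hlen : l.length = x + 1 := by rw [hldef]; simp
  have hget0 : l.getD 0 0 = 2 ^ k - x := by rw [hldef]; rfl
  have hgeti : ∀ i, 1 ≤ i → i ≤ x → l.getD i 0 = 1 := by
    intro i h1 h2
    rw [hldef]
    rcases i with _ | j
    · omega
    · rw [List.getD_cons_succ]
      rw [List.getD_eq_getElem _ _ (by simp only [List.length_replicate]; omega)]
      simp
  have hbet0 : bet l 0 = 2 ^ k := by unfold bet; rw [hget0, hlen]; omega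
  have hbeti : ∀ i, 1 ≤ i → i ≤ x → bet l i = x + 1 - i := by
    intro i h1 h2
    unfold bet; rw [hgeti i h1 h2, hlen]; omega
  have hPpos := Pd_pos hs hp
  have hVpos := Vd_pos hs
  have hPV := Pd_mul_Vd hs
  have hnuPV : nu (Pd l) + nu (Vd l)
      = ∑ i ∈ Finset.range (x + 1), nu (Nat.factorial (bet l i)) := by
    rw [← nu_mul (by omega) (by omega), hPV, hlen,
      nu_prod _ _ (fun i _ => Nat.factorial_ne_zero _)]
  have hfacpos : ∀ i ∈ Finset.range (x + 1), ∀ t ∈ Finset.Ioo i (x + 1),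
      bet l i - bet l t ≠ 0 := by
    intro i _ t ht
    rw [Finset.mem_Ioo] at ht
    have := bet_strict_anti hs ht.1 (by rw [hlen]; omega)
    omega
  have hVd1 : nu (Vd l)
      = ∑ i ∈ Finset.range (x + 1), ∑ t ∈ Finset.Ioo i (x + 1), nu (bet l i - bet l t) := by
    rw [Vd, hlen, nu_prod _ _ (fun i hi => Finset.prod_ne_zero_iff.mpr (hfacpos i hi))]
    apply Finset.sum_congr rfl
    intro i hi
    exact nu_prod _ _ (hfacpos i hi)
  have hsplitV : nu (Vd l)
      = (∑ i ∈ Finset.range x, ∑ t ∈ Finset.Ioo (i + 1) (x + 1), nu (bet l (i + 1) - bet l t))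
        + ∑ t ∈ Finset.Ioo 0 (x + 1), nu (bet l 0 - bet l t) := by
    rw [hVd1, Finset.sum_range_succ']
  have hA : ∑ t ∈ Finset.Ioo 0 (x + 1), nu (bet l 0 - bet l t) = nu (Nat.factorial x) := by
    have hterm : ∀ t ∈ Finset.Ioo 0 (x + 1), nu (bet l 0 - bet l t) = nu (x + 1 - t) := by
      intro t ht
      rw [Finset.mem_Ioo] at ht
      rw [hbet0, hbeti t (by omega) (by omega)]
      exact nu_pow_sub (by omega) (by omega)
    rw [Finset.sum_congr rfl hterm, nu_factorial]
    apply Finset.sum_nbij' (fun t => x + 1 - t) (fun m => x + 1 - m)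
    · intro a ha; rw [Finset.mem_Ioo] at ha; rw [Finset.mem_Icc]; omega
    · intro m hm; rw [Finset.mem_Icc] at hm; rw [Finset.mem_Ioo]; omega
    · intro a ha; rw [Finset.mem_Ioo] at ha; omega
    · intro m hm; rw [Finset.mem_Icc] at hm; omega
    · intro a _; rfl
  have hB : ∀ i ∈ Finset.range x,
      ∑ t ∈ Finset.Ioo (i + 1) (x + 1), nu (bet l (i + 1) - bet l t)
        = nu (Nat.factorial (x - i - 1)) := by
    intro i hi
    rw [Finset.mem_range] at hi
    have hterm : ∀ t ∈ Finset.Ioo (i + 1) (x + 1),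
        nu (bet l (i + 1) - bet l t) = nu (t - i - 1) := by
      intro t ht
      rw [Finset.mem_Ioo] at ht
      rw [hbeti (i + 1) (by omega) (by omega), hbeti t (by omega) (by omega)]
      congr 1
      omega
    rw [Finset.sum_congr rfl hterm, nu_factorial]
    apply Finset.sum_nbij' (fun t => t - i - 1) (fun j => j + i + 1)
    · intro a ha; rw [Finset.mem_Ioo] at ha; rw [Finset.mem_Icc]; omega
    · intro m hm; rw [Finset.mem_Icc] at hm; rw [Finset.mem_Ioo]; omega
    · intro a ha; rw [Finset.mem_Ioo] at ha; omega
    · intro m hm; rw [Finset.mem_Icc] at hm; omega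
    · intro a _; rfl
  have htel : ∑ i ∈ Finset.range x, nu (Nat.factorial (x - i))
      = nu (Nat.factorial x) + ∑ i ∈ Finset.range x, nu (Nat.factorial (x - i - 1)) := by
    have hterm : ∀ i ∈ Finset.range x, nu (Nat.factorial (x - i))
        = nu (x - i) + nu (Nat.factorial (x - i - 1)) := by
      intro i hi
      rw [Finset.mem_range] at hi
      have h1 : x - i = (x - i - 1) + 1 := by omega
      rw [h1, Nat.factorial_succ, nu_mul (by omega) (Nat.factorial_ne_zero _), ← h1]
    rw [Finset.sum_congr rfl hterm, Finset.sum_add_distrib]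
    congr 1
    rw [nu_factorial]
    apply Finset.sum_nbij' (fun i => x - i) (fun m => x - m)
    · intro a ha; rw [Finset.mem_range] at ha; rw [Finset.mem_Icc]; omega
    · intro m hm; rw [Finset.mem_Icc] at hm; rw [Finset.mem_range]; omega
    · intro a ha; rw [Finset.mem_range] at ha; omega
    · intro m hm; rw [Finset.mem_Icc] at hm; omega
    · intro a _; rfl
  have hRHS : ∑ i ∈ Finset.range (x + 1), nu (Nat.factorial (bet l i))
      = (∑ i ∈ Finset.range x, nu (Nat.factorial (x - i)))
        + nu (Nat.factorial (2 ^ k)) := by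
    rw [Finset.sum_range_succ', hbet0]
    congr 1
    apply Finset.sum_congr rfl
    intro i hi
    rw [Finset.mem_range] at hi
    rw [hbeti (i + 1) (by omega) (by omega)]
    congr 2
    omega
  rw [Finset.sum_congr rfl hB, hA] at hsplitV
  rw [hRHS] at hnuPV
  omega

end OddHook


open PaperNote in
/-- Let `k ≥ 1` and `n = 2^k`.  A partition `λ` of `n` labels an
odd-degree irreducible character of `S_n` (degree given by the hook length formula) if and
only if `λ` is a hook partition `(n−x, 1^x)`. -/
theorem odd_degree_iff_hook
    (k : ℕ) (hk : 1 ≤ k) (n : ℕ) (hn : n = 2 ^ k)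
    (lam : List ℕ) (hlam : IsPartition lam n) :
    Odd (charDegree lam) ↔ IsHookPartition lam n := by
  obtain ⟨hs, hp, hsum⟩ := hlam
  subst hn
  constructor
  · intro hodd
    exact OddHook.converse_dir hs hp hk hsum hodd
  · rintro ⟨x, hx, hldef⟩
    have hdeg : charDegree lam = Nat.factorial lam.sum / OddHook.Pd lam := rfl
    rw [hdeg, OddHook.odd_div_iff (OddHook.Pd_dvd_factorial hs) (OddHook.Pd_pos hs hp), hsum]
    exact OddHook.forward_dir hk hx hldef hs hp
end

section
/- Let λ be a partition of 2^k with λ₁ ≥ 2 (i.e. λ is a partition of the form considered, with hooks h_{1,2}(λ) = h_{2,1}(λ) = 2^{k-1}) of shape λ = (q−x+1, q−y, 2^{x−1}, 1^{y−x+1}) where q = 2^{k-1}, and suppose s = y−x+1 is odd and Δ²(λ) is a hook partition of q. Then λ₂ = 2, equivalently y = q − 2, and λ = (s+2, 2^x, 1^s). -/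
open PaperNote in
private lemma hook_countP_le {l : List ℕ} {q : ℕ} (h : IsHookPartition l q) :
    l.countP (fun a => decide (2 ≤ a)) ≤ 1 := by
  obtain ⟨t, -, rfl⟩ := h
  simp only [List.countP_cons, List.countP_replicate]
  norm_num
  split_ifs <;> omega

open PaperNote in
private lemma key_count (o e n m : ℕ) (lam : List ℕ)
    (hodd : lam.filter (fun a => decide (a % 2 = 1)) = o :: List.replicate (2*m+1) 1)
    (heven : lam.filter (fun a => decide (a % 2 = 0)) = e :: List.replicate n 2)
    (ho3 : 3 ≤ o) :
    (deltaSq lam).countP (fun a => decide (2 ≤ a)) = 1 + (if 2 ≤ e / 2 then 1 else 0) := by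
  have hks : (lam.filter (fun a => decide (a % 2 = 1))).map (fun a => a / 2)
      = o / 2 :: List.replicate (2*m+1) 0 := by rw [hodd]; simp
  have hrs : (lam.filter (fun a => decide (a % 2 = 0))).map (fun a => a / 2)
      = e / 2 :: List.replicate n 1 := by rw [heven]; simp
  simp only [deltaSq, hks, hrs]
  rw [List.countP_filter, (List.perm_insertionSort _ _).countP_eq]
  simp only [List.length_cons, List.length_replicate]
  rw [show (2*m+1+1)/2 = m + 1 from by omega]
  rw [List.take_succ_cons, List.take_replicate, List.drop_succ_cons, List.drop_replicate]
  rw [show m ⊓ (2*m+1) = m from by omega, show 2*m+1 - m = m+1 from by omega]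
  simp only [List.map_cons, List.map_replicate, List.cons_append,
    List.countP_append, List.countP_cons, List.countP_replicate, List.countP_nil]
  have h1 : 2 ≤ o / 2 + 1 := by omega
  have h2 : (2 ≤ e / 2) → (0 < e / 2) := by omega
  norm_num
  split_ifs <;> omega

open PaperNote in
/-- Let `q = 2^{k-1}` (`k ≥ 2`), `λ = (q−x+1, q−y, 2^{x−1}, 1^{y−x+1})`
with `x ∈ {1,…,q−1}`, `y ∈ {x−1,…,q−2}`, suppose `s = y−x+1` is odd and `Δ²(λ)` is a hook
partition of `q`.  Then `λ₂ = 2`, equivalently `y = q−2`, and `λ = (s+2, 2^x, 1^s)`. -/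
theorem deltaSq_hook_forces_second_part_two
    (k : ℕ) (hk : 2 ≤ k) (q x y : ℕ) (hq : q = 2 ^ (k - 1))
    (hx1 : 1 ≤ x) (hxq : x ≤ q - 1) (hyx : x - 1 ≤ y) (hyq : y ≤ q - 2)
    (hs : Odd (y - (x - 1)))
    (lam : List ℕ)
    (hlamdef : lam = [q - x + 1, q - y] ++ List.replicate (x - 1) 2 ++
      List.replicate (y - (x - 1)) 1)
    (hhook : IsHookPartition (deltaSq lam) q) :
    lam.getD 1 0 = 2 ∧ y = q - 2 ∧
      lam = (y - (x - 1) + 2) :: (List.replicate x 2 ++ List.replicate (y - (x - 1)) 1) := by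
  have h2p : (2:ℕ)^1 ≤ 2^(k-1) := Nat.pow_le_pow_right (by norm_num) (by omega)
  rw [pow_one] at h2p
  have hq2 : 2 ≤ q := hq ▸ h2p
  have hdvd : 2 ∣ q := hq ▸ dvd_pow_self 2 (by omega : k - 1 ≠ 0)
  have hqe : q % 2 = 0 := by omega
  obtain ⟨x', rfl⟩ : ∃ x', x = x' + 1 := ⟨x - 1, by omega⟩
  simp only [Nat.add_sub_cancel] at hyx hlamdef ⊢
  have hs1 : (y - x') % 2 = 1 := Nat.odd_iff.mp hs
  have hxy : x' + 1 ≤ y := by omega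
  have hyq2 : y + 2 ≤ q := by omega
  obtain ⟨m, hm⟩ : ∃ m, y - x' = 2 * m + 1 := ⟨(y - x') / 2, by omega⟩
  rw [hm] at hlamdef ⊢
  subst hlamdef
  have hcount := hook_countP_le hhook
  rcases Nat.mod_two_eq_zero_or_one (x' + 1) with hx | hx
  · -- x even: q - x + 1 odd, q - y even
    have ha : (q - (x' + 1) + 1) % 2 = 1 := by omega
    have hb : (q - y) % 2 = 0 := by omega
    have hodd : (([q - (x' + 1) + 1, q - y] ++ List.replicate x' 2 ++
        List.replicate (2*m+1) 1).filter (fun a => decide (a % 2 = 1)))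
        = (q - (x' + 1) + 1) :: List.replicate (2*m+1) 1 := by
      simp [List.filter_append, List.filter_replicate, ha, hb]
    have heven : (([q - (x' + 1) + 1, q - y] ++ List.replicate x' 2 ++
        List.replicate (2*m+1) 1).filter (fun a => decide (a % 2 = 0)))
        = (q - y) :: List.replicate x' 2 := by
      simp [List.filter_append, List.filter_replicate, ha, hb]
    have ha3 : 3 ≤ q - (x' + 1) + 1 := by omega
    rw [key_count _ _ _ _ _ hodd heven ha3] at hcount
    have hb2 : q - y = 2 := by split_ifs at hcount <;> omega
    have hy : y = q - 2 := by omega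
    refine ⟨by simp [hb2], hy, ?_⟩
    rw [show q - (x' + 1) + 1 = 2*m+1+2 from by omega, hb2]
    simp [List.replicate_succ]
  · -- x odd: q - x + 1 even, q - y odd, two parts ≥ 2: contradiction
    have ha : (q - (x' + 1) + 1) % 2 = 0 := by omega
    have hb : (q - y) % 2 = 1 := by omega
    have hodd : (([q - (x' + 1) + 1, q - y] ++ List.replicate x' 2 ++
        List.replicate (2*m+1) 1).filter (fun a => decide (a % 2 = 1)))
        = (q - y) :: List.replicate (2*m+1) 1 := by
      simp [List.filter_append, List.filter_replicate, ha, hb]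
    have heven : (([q - (x' + 1) + 1, q - y] ++ List.replicate x' 2 ++
        List.replicate (2*m+1) 1).filter (fun a => decide (a % 2 = 0)))
        = (q - (x' + 1) + 1) :: List.replicate x' 2 := by
      simp [List.filter_append, List.filter_replicate, ha, hb]
    have hb3 : 3 ≤ q - y := by omega
    rw [key_count _ _ _ _ _ hodd heven hb3] at hcount
    have ha4 : 2 ≤ (q - (x' + 1) + 1) / 2 := by omega
    rw [if_pos ha4] at hcount
    omega
end

section
/- Let λ = (q, x+1, 1^s) with q = 2^{k-1} ≥ 4, x ≥ 2, s ≥ 1, and λ a partition of 2q. Then Δ²(λ) is not a hook partition of q. -/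
open PaperNote in
lemma countP_deltaSq_aux (lam : List ℕ) :
    (deltaSq lam).countP (fun a => decide (2 ≤ a)) =
    (let ks := (lam.filter (fun a => decide (a % 2 = 1))).map (fun a => a / 2)
     let rs := (lam.filter (fun a => decide (a % 2 = 0))).map (fun a => a / 2)
     (((ks.take (ks.length / 2)).map (· + 1)) ++ ks.drop (ks.length / 2) ++ rs)).countP
      (fun a => decide (2 ≤ a)) := by
  unfold deltaSq
  rw [List.countP_filter, (List.perm_insertionSort _ _).countP_eq]
  apply List.countP_congr
  intro a _
  by_cases h : 2 ≤ a <;> simp [h] <;> omega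

open PaperNote in
lemma hook_countP_aux {l : List ℕ} {n : ℕ} (h : IsHookPartition l n) :
    l.countP (fun a => decide (2 ≤ a)) ≤ 1 := by
  obtain ⟨y, -, rfl⟩ := h
  have h0 : (List.replicate y 1).countP (fun a => decide (2 ≤ a)) = 0 := by
    rw [List.countP_eq_zero]; intro a ha; simp [List.eq_of_mem_replicate ha]
  simp [List.countP_cons, h0]
  split <;> omega

open PaperNote in
/-- Let `λ = (q, x+1, 1^s)` with `q = 2^{k-1} ≥ 4`, `x ≥ 2`, `s ≥ 1`,
and `λ` a partition of `2q`.  Then `Δ²(λ)` is not a hook partition of `q`. -/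
theorem deltaSq_not_hook
    (k : ℕ) (hk : 3 ≤ k) (q x s : ℕ) (hq : q = 2 ^ (k - 1))
    (hx : 2 ≤ x) (hs : 1 ≤ s) (hxq : x + 1 ≤ q)
    (hsum : q + (x + 1) + s = 2 * q) :
    ¬ IsHookPartition (deltaSq (q :: (x + 1) :: List.replicate s 1)) q := by
  intro hhook
  have hq2 : q % 2 = 0 := by
    subst hq
    have : k - 1 = (k - 2) + 1 := by omega
    rw [this, pow_succ]
    simp [Nat.mul_mod]
  have hq4 : 4 ≤ q := by
    subst hq
    calc (4:ℕ) = 2 ^ 2 := by norm_num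
    _ ≤ 2 ^ (k - 1) := Nat.pow_le_pow_right (by norm_num) (by omega)
  have hupper := hook_countP_aux hhook
  have hlower : 2 ≤ (deltaSq (q :: (x + 1) :: List.replicate s 1)).countP
      (fun a => decide (2 ≤ a)) := by
    rw [countP_deltaSq_aux]
    rcases Nat.even_or_odd x with hpar | hpar
    · have hpar0 : x % 2 = 0 := Nat.even_iff.mp hpar
      have h1 : (x+1) % 2 = 1 := by omega
      simp only [List.filter_cons, hq2, h1]
      norm_num
      have hh : (s+1)/2 = ((s+1)/2 - 1) + 1 := by omega
      rw [hh, List.take_succ_cons, List.countP_cons]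
      have e1 : (decide (2 ≤ (x+1)/2 + 1) : Bool) = true := by
        have : 2 ≤ (x+1)/2 + 1 := by omega
        simp [this]
      have hq' : 2 ≤ q/2 := by omega
      have e2 : List.countP (fun a => decide (2 ≤ a)) [q/2] = 1 := by simp [hq']
      rw [e1, if_pos hq', if_pos rfl]
      omega
    · have hpar' : x % 2 = 1 := Nat.odd_iff.mp hpar
      have h1 : (x+1) % 2 = 0 := by omega
      simp only [List.filter_cons, hq2, h1]
      norm_num
      have hq' : 2 ≤ q/2 := by omega
      have hx' : 2 ≤ (x+1)/2 := by omega
      have e2 : List.countP (fun a => decide (2 ≤ a)) [q/2, (x+1)/2] = 2 := by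
        simp [hq', hx']
      rw [e2]
      omega
  omega
end
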